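/- arXiv:2605.19696 — 7 statements merged into one kernel-verified Lean document; each statement's English description precedes it below -/
import Mathlib

section
/- Let R be a commutative ring, let s be a finite nonempty set, and let G assign to every nonempty finite subset of s an element of R. For every nonempty subset A of s define the cumulant g(A) := Σ_{σ ∈ P(A)} (−1)^{|σ|−1} (|σ|−1)! ∏_{B ∈ σ} G(B), where P(A) denotes the set of partitions of A into nonempty blocks and |σ| the number of blocks of σ. Then the inversion formula holds: G(s) = Σ_{σ ∈ P(s)} ∏_{B ∈ σ} g(B). -/
open Finset

namespace CumulantAux


def mval (R : Type*) [CommRing R] (k : ℕ) : R :=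
  (-1) ^ (k - 1) * ((k - 1).factorial : R)

theorem mval_one (R : Type*) [CommRing R] : mval R 1 = 1 := by simp [mval]

theorem key_arith (R : Type*) [CommRing R] (k : ℕ) :
    (k + 1) • mval R (k + 1) + mval R (k + 2) = 0 := by
  simp only [mval, Nat.add_sub_cancel, nsmul_eq_mul]
  rw [show k + 2 - 1 = k + 1 from rfl, Nat.factorial_succ, pow_succ]
  push_cast
  ring

theorem parts_eq_of_heq {β : Type*} [Lattice β] [OrderBot β] {a b : β} (h : a = b)
    {P : Finpartition a} {Q : Finpartition b} (hPQ : HEq P Q) : P.parts = Q.parts := by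
  subst h; cases hPQ; rfl

theorem finpartition_heq {β : Type*} [Lattice β] [OrderBot β] {a b : β} (h : a = b)
    {P : Finpartition a} {Q : Finpartition b} (hp : P.parts = Q.parts) : HEq P Q := by
  subst h; rw [Finpartition.ext hp]

variable {β : Type*} [DecidableEq β]

theorem avoid_parts_of_mem {A : Finset β} (π : Finpartition A) {t : Finset β}
    (ht : t ∈ π.parts) : (π.avoid t).parts = π.parts.erase t := by
  ext c
  rw [Finpartition.mem_avoid, mem_erase]
  constructor
  · rintro ⟨d, hd, hdt, rfl⟩
    have hne : d ≠ t := by rintro rfl; exact hdt le_rfl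
    have hdisj : Disjoint d t := π.disjoint hd ht hne
    rw [sdiff_eq_self_of_disjoint hdisj]
    exact ⟨hne, hd⟩
  · rintro ⟨hne, hc⟩
    have hdisj : Disjoint c t := π.disjoint hc ht hne
    refine ⟨c, hc, fun hle => ?_, sdiff_eq_self_of_disjoint hdisj⟩
    exact π.ne_bot hc (le_bot_iff.1 (hdisj le_rfl hle))

theorem sum_mval_aux {R : Type*} [CommRing R] :
    ∀ (n : ℕ) (A : Finset β), A.card = n →
      ∑ π : Finpartition A, ∏ P ∈ π.parts, mval R P.card
        = if A.card ≤ 1 then (1 : R) else 0 := by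
  intro n
  induction n using Nat.strong_induction_on with
  | _ n ih =>
  intro A hA
  match n, hA with
  | 0, hA =>
    obtain rfl : A = ∅ := card_eq_zero.1 hA
    rw [if_pos (by simp)]
    have h0 : ∀ π : Finpartition (∅ : Finset β), π.parts = ∅ := fun π =>
      Finpartition.parts_eq_empty_iff.2 rfl
    haveI : Unique (Finpartition (∅ : Finset β)) :=
      inferInstanceAs (Unique (Finpartition (⊥ : Finset β)))
    rw [Fintype.sum_unique, h0, prod_empty]
  | 1, hA =>
    obtain ⟨a, rfl⟩ := card_eq_one.1 hA
    rw [if_pos (by simp)]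
    haveI := (Finset.isAtom_singleton a).uniqueFinpartition (P := Finpartition.indiscrete (by simp))
    rw [Fintype.sum_unique]
    have hdp : (default : Finpartition ({a} : Finset β))
        = Finpartition.indiscrete (by simp) := Subsingleton.elim _ _
    rw [hdp, Finpartition.indiscrete_parts, prod_singleton, card_singleton, mval_one]
  | (k + 2), hA =>
    have hcard : 2 ≤ A.card := by omega
    obtain ⟨a, ha⟩ : A.Nonempty := card_pos.1 (by omega)
    rw [if_neg (by omega)]
    set E := A.erase a with hE
    have hEcard : E.card = k + 1 := by simp [hE, card_erase_of_mem ha, hA]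
    have hcopy : ∀ π : Finpartition A, A \ π.part a = E \ (π.part a).erase a := by
      intro π
      have hmem := π.mem_part ha
      ext x
      simp only [mem_sdiff, hE, mem_erase]
      have hxa : x = a → x ∈ π.part a := fun h => h ▸ hmem
      tauto
    -- forward map
    let iF : Finpartition A → Σ T : Finset β, Finpartition (E \ T) := fun π =>
      ⟨(π.part a).erase a, (π.avoid (π.part a)).copy (hcopy π)⟩
    -- backward map
    have hAne : A ≠ ⊥ := by
      rw [Finset.bot_eq_empty, ← Finset.nonempty_iff_ne_empty]; exact ⟨a, ha⟩
    have hsup : ∀ T : Finset β, T ⊆ E → (E \ T) ⊔ insert a T = A := by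
      intro T hT
      rw [Finset.sup_eq_union]
      ext y
      have h' : ∀ z, z ∈ T → z ∈ A ∧ z ≠ a := fun z hz => by
        have := hT hz; rw [hE, mem_erase] at this; exact ⟨this.2, this.1⟩
      simp only [mem_union, mem_sdiff, mem_insert, hE, mem_erase]
      constructor
      · rintro (⟨⟨_, hy⟩, _⟩ | rfl | hy)
        · exact hy
        · exact ha
        · exact (h' y hy).1
      · intro hy
        by_cases h1 : y = a
        · exact Or.inr (Or.inl h1)
        · by_cases h2 : y ∈ T
          · exact Or.inr (Or.inr h2)
          · exact Or.inl ⟨⟨h1, hy⟩, h2⟩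
    let jF : (Σ T : Finset β, Finpartition (E \ T)) → Finpartition A := fun x =>
      if h : x.1 ⊆ E then
        x.2.extend (by simp [Finset.bot_eq_empty])
          (by
            rw [Finset.disjoint_insert_right]
            exact ⟨by simp [hE], Finset.sdiff_disjoint⟩)
          (hsup x.1 h)
      else Finpartition.indiscrete hAne
    have step1 : ∑ π : Finpartition A, ∏ P ∈ π.parts, mval R P.card
        = ∑ x ∈ E.powerset.sigma (fun T => (univ : Finset (Finpartition (E \ T)))),
            mval R (x.1.card + 1) * ∏ P ∈ x.2.parts, mval R P.card := by
      refine Finset.sum_nbij' iF jF ?_ ?_ ?_ ?_ ?_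
      · intro π _
        rw [mem_sigma, mem_powerset]
        exact ⟨Finset.erase_subset_erase a (π.le (π.part_mem.2 ha)), mem_univ _⟩
      · intro x _; exact mem_univ _
      · intro π _
        have hT : (π.part a).erase a ⊆ E := Finset.erase_subset_erase a (π.le (π.part_mem.2 ha))
        show jF (iF π) = π
        simp only [iF, jF, dif_pos hT]
        apply Finpartition.ext
        rw [Finpartition.extend_parts, Finpartition.copy_parts,
          avoid_parts_of_mem π (π.part_mem.2 ha), Finset.insert_erase (π.mem_part ha),
          Finset.insert_erase (π.part_mem.2 ha)]
      · rintro ⟨T, τ⟩ hmem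
        rw [mem_sigma, mem_powerset] at hmem
        have hT : T ⊆ E := hmem.1
        have haT : a ∉ T := fun h => by
          have := hT h; rw [hE, mem_erase] at this; exact this.1 rfl
        show iF (jF ⟨T, τ⟩) = ⟨T, τ⟩
        simp only [iF, jF, dif_pos hT]
        set π := τ.extend _ _ _ with hπ
        have hmemi : insert a T ∈ π.parts := by
          rw [hπ, Finpartition.extend_parts]; exact mem_insert_self _ _
        have hpart : π.part a = insert a T :=
          π.part_eq_of_mem hmemi (mem_insert_self a T)
        have h1 : (π.part a).erase a = T := by
          rw [hpart, Finset.erase_insert haT]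
        refine Sigma.ext h1 (finpartition_heq (congrArg (fun t => E \ t) h1) ?_)
        rw [Finpartition.copy_parts, avoid_parts_of_mem π (π.part_mem.2 ha), hpart,
          hπ, Finpartition.extend_parts, Finset.erase_insert]
        intro hmem'
        have := τ.le hmem' (mem_insert_self a T)
        rw [mem_sdiff, hE, mem_erase] at this
        exact this.1.1 rfl
      · intro π _
        show ∏ P ∈ π.parts, mval R P.card = _
        simp only [iF, Finpartition.copy_parts, avoid_parts_of_mem π (π.part_mem.2 ha)]
        rw [Finset.card_erase_add_one (π.mem_part ha)]
        exact (Finset.mul_prod_erase π.parts _ (π.part_mem.2 ha)).symm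
    rw [step1, Finset.sum_sigma]
    have step2 : ∀ T ∈ E.powerset,
        (∑ τ ∈ (univ : Finset (Finpartition (E \ T))),
          mval R (T.card + 1) * ∏ P ∈ τ.parts, mval R P.card)
        = mval R (T.card + 1) * (if k + 1 - T.card ≤ 1 then (1 : R) else 0) := by
      intro T hT
      rw [mem_powerset] at hT
      have hc : (E \ T).card = k + 1 - T.card := by
        rw [card_sdiff_of_subset hT, hEcard]
      rw [← mul_sum, ih (E \ T).card (by omega) (E \ T) rfl, hc]
    rw [Finset.sum_congr rfl step2]
    have : ∀ T : Finset β, T ∈ E.powerset →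
        mval R (T.card + 1) * (if k + 1 - T.card ≤ 1 then (1 : R) else 0)
        = (fun j => mval R (j + 1) * (if k + 1 - j ≤ 1 then (1 : R) else 0)) T.card :=
      fun T _ => rfl
    rw [Finset.sum_congr rfl this]
    have hps := Finset.sum_powerset_apply_card (α := R)
      (f := fun j => mval R (j + 1) * (if k + 1 - j ≤ 1 then (1 : R) else 0)) (x := E)
    rw [hps, hEcard]
    rw [Finset.sum_range_succ, Finset.sum_range_succ,
      Finset.sum_eq_zero (fun j hj => by
        rw [mem_range] at hj
        rw [if_neg (by omega), mul_zero, smul_zero])]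
    simp only [Nat.choose_succ_self_right, Nat.choose_self, zero_add, one_smul]
    rw [if_pos (by omega), if_pos (by omega), mul_one, mul_one]
    exact key_arith R k

theorem sum_mval {R : Type*} [CommRing R] (A : Finset β) :
    ∑ π : Finpartition A, ∏ P ∈ π.parts, mval R P.card
      = if A.card ≤ 1 then (1 : R) else 0 :=
  sum_mval_aux A.card A rfl


variable {α : Type*} [DecidableEq α] {s : Finset α}


theorem block_eq_of (σ : Finpartition s) {B B' C : Finset α} (hB : B ∈ σ.parts)
    (hB' : B' ∈ σ.parts) (hC : C.Nonempty) (h1 : C ⊆ B) (h2 : C ⊆ B') : B = B' := by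
  obtain ⟨x, hx⟩ := hC
  exact σ.eq_of_mem_parts hB hB' (h1 hx) (h2 hx)

/-- The partition of `(σ.bind p).parts` whose blocks are the `(p B).parts`. -/
def πof (σ : Finpartition s) (p : ∀ B ∈ σ.parts, Finpartition B) :
    Finpartition ((σ.bind p).parts) where
  parts := σ.parts.attach.image fun B => (p B.1 B.2).parts
  supIndep := by
    rw [Finset.supIndep_iff_pairwiseDisjoint]
    rintro P hP Q hQ hne
    simp only [coe_image, Set.mem_image, mem_coe] at hP hQ
    obtain ⟨B, -, rfl⟩ := hP
    obtain ⟨B', -, rfl⟩ := hQ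
    rw [Function.onFun, Finset.disjoint_left]
    intro C hC hC'
    refine hne ?_
    have hBB' : B.1 = B'.1 :=
      block_eq_of σ B.2 B'.2 ((p B.1 B.2).nonempty_of_mem_parts hC)
        ((p B.1 B.2).le hC) ((p B'.1 B'.2).le hC')
    cases B; cases B'; cases hBB'; rfl
  sup_parts := by
    rw [Finset.sup_image, Finpartition.bind_parts, ← Finset.sup_eq_biUnion]
    rfl
  bot_notMem := by
    intro h
    obtain ⟨B, -, hBe⟩ := mem_image.1 h
    obtain ⟨C, hC⟩ := (p B.1 B.2).parts_nonempty (σ.ne_bot B.2)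
    rw [hBe] at hC
    exact notMem_empty C hC

theorem πof_parts (σ : Finpartition s) (p : ∀ B ∈ σ.parts, Finpartition B) :
    (πof σ p).parts = σ.parts.attach.image fun B => (p B.1 B.2).parts := rfl

theorem parts_p_eq_filter (σ : Finpartition s) (p : ∀ B ∈ σ.parts, Finpartition B)
    {B : Finset α} (hB : B ∈ σ.parts) :
    (p B hB).parts = (σ.bind p).parts.filter (· ⊆ B) := by
  ext C
  rw [mem_filter, Finpartition.mem_bind]
  constructor
  · intro hC
    exact ⟨⟨B, hB, hC⟩, (p B hB).le hC⟩
  · rintro ⟨⟨B', hB', hC'⟩, hCB⟩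
    obtain rfl : B' = B :=
      block_eq_of σ hB' hB ((p B' hB').nonempty_of_mem_parts hC') ((p B' hB').le hC') hCB
    exact hC'

theorem image_sup_πof (σ : Finpartition s) (p : ∀ B ∈ σ.parts, Finpartition B) :
    (πof σ p).parts.image (fun P => P.sup id) = σ.parts := by
  rw [πof_parts, Finset.image_image]
  have h : Set.EqOn
      ((fun P : Finset (Finset α) => P.sup id) ∘ fun B : {x // x ∈ σ.parts} => (p B.1 B.2).parts)
      (fun B => B.1) σ.parts.attach := fun B _ => (p B.1 B.2).sup_parts
  rw [Finset.image_congr h, attach_image_val]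

theorem sup_disjoint (ρ : Finpartition s) (π : Finpartition ρ.parts)
    {P Q : Finset (Finset α)} (hP : P ∈ π.parts) (hQ : Q ∈ π.parts) (hne : P ≠ Q) :
    Disjoint (P.sup id) (Q.sup id) := by
  rw [Finset.disjoint_sup_left]
  intro C hC
  rw [Finset.disjoint_sup_right]
  intro D hD
  refine ρ.disjoint (π.le hP hC) (π.le hQ hD) ?_
  rintro rfl
  exact (Finset.disjoint_left.1 (π.disjoint hP hQ hne)) hC hD

theorem filter_eq_of_mem (ρ : Finpartition s) (π : Finpartition ρ.parts)
    {P : Finset (Finset α)} (hP : P ∈ π.parts) :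
    ρ.parts.filter (· ⊆ P.sup id) = P := by
  ext C
  rw [mem_filter]
  constructor
  · rintro ⟨hC, hCP⟩
    obtain ⟨Q, hQ, hCQ⟩ := π.exists_mem hC
    by_cases hPQ : Q = P
    · exact hPQ ▸ hCQ
    · have hd := sup_disjoint ρ π hQ hP hPQ
      have h1 : C ≤ Q.sup id := Finset.le_sup (f := id) hCQ
      exact absurd (le_bot_iff.1 (hd h1 hCP)) (ρ.ne_bot hC)
  · intro hC
    exact ⟨π.le hP hC, Finset.le_sup (f := id) hC⟩

/-- The coarsening of `ρ` by grouping its blocks along `π`. -/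
def σof (ρ : Finpartition s) (π : Finpartition ρ.parts) : Finpartition s where
  parts := π.parts.image fun P => P.sup id
  supIndep := by
    rw [Finset.supIndep_iff_pairwiseDisjoint]
    rintro b hb c hc hne
    simp only [coe_image, Set.mem_image, mem_coe] at hb hc
    obtain ⟨P, hP, rfl⟩ := hb
    obtain ⟨Q, hQ, rfl⟩ := hc
    exact sup_disjoint ρ π hP hQ (by rintro rfl; exact hne rfl)
  sup_parts := by
    rw [Finset.sup_image]
    have h : π.parts.sup (id ∘ fun P : Finset (Finset α) => P.sup id)
        = (π.parts.biUnion id).sup id := by rw [Finset.sup_biUnion]; rfl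
    rw [h, π.biUnion_parts, ρ.sup_parts]
  bot_notMem := by
    intro h
    obtain ⟨P, hP, hPe⟩ := mem_image.1 h
    obtain ⟨C, hC⟩ := π.nonempty_of_mem_parts hP
    have hle : C ≤ P.sup id := Finset.le_sup (f := id) hC
    rw [hPe] at hle
    exact ρ.ne_bot (π.le hP hC) (le_bot_iff.1 hle)
  
theorem sup_filter_of_mem (ρ : Finpartition s) (π : Finpartition ρ.parts) {B : Finset α}
    (hB : B ∈ (σof ρ π).parts) : (ρ.parts.filter (· ⊆ B)).sup id = B := by
  obtain ⟨P, hP, rfl⟩ := mem_image.1 hB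
  rw [filter_eq_of_mem ρ π hP]

/-- The partition of a union `B` of blocks of `ρ` into those blocks. -/
def pof (ρ : Finpartition s) {B : Finset α} (h : (ρ.parts.filter (· ⊆ B)).sup id = B) :
    Finpartition B where
  parts := ρ.parts.filter (· ⊆ B)
  supIndep := ρ.supIndep.subset (filter_subset _ _)
  sup_parts := h
  bot_notMem h' := ρ.bot_notMem (mem_filter.1 h').1

theorem p_parts_pairwiseDisjoint (σ : Finpartition s) (p : ∀ B ∈ σ.parts, Finpartition B) :
    (↑σ.parts.attach : Set {x // x ∈ σ.parts}).PairwiseDisjoint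
      fun B : {x // x ∈ σ.parts} => (p B.1 B.2).parts := by
  intro B _ B' _ hne
  rw [Function.onFun, Finset.disjoint_left]
  intro C hC hC'
  refine hne ?_
  have hBB' : B.1 = B'.1 :=
    block_eq_of σ B.2 B'.2 ((p B.1 B.2).nonempty_of_mem_parts hC)
      ((p B.1 B.2).le hC) ((p B'.1 B'.2).le hC')
  exact Subtype.ext hBB'

theorem weight_eq {R : Type*} [CommRing R] (G : Finset α → R) (σ : Finpartition s)
    (p : ∀ B ∈ σ.parts, Finpartition B) :
    ∏ B ∈ σ.parts.attach, (mval R ((p B.1 B.2).parts.card) * ∏ C ∈ (p B.1 B.2).parts, G C)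
      = (∏ P ∈ (πof σ p).parts, mval R P.card) * ∏ C ∈ (σ.bind p).parts, G C := by
  rw [prod_mul_distrib]
  congr 1
  · rw [πof_parts, Finset.prod_image]
    intro B _ B' _ h
    have : B.1 = B'.1 := by
      rw [← (p B.1 B.2).sup_parts, ← (p B'.1 B'.2).sup_parts, (by exact h : (p B.1 B.2).parts = (p B'.1 B'.2).parts)]
    exact Subtype.ext this
  · rw [Finpartition.bind_parts, Finset.prod_biUnion (p_parts_pairwiseDisjoint σ p)]

theorem σof_parts (ρ : Finpartition s) (π : Finpartition ρ.parts) :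
    (σof ρ π).parts = π.parts.image fun P => P.sup id := rfl

theorem pof_parts (ρ : Finpartition s) {B : Finset α}
    (h : (ρ.parts.filter (· ⊆ B)).sup id = B) :
    (pof ρ h).parts = ρ.parts.filter (· ⊆ B) := rfl

theorem pi_heq {σ₁ σ₂ : Finpartition s} (h : σ₁ = σ₂)
    {p₁ : ∀ B ∈ σ₁.parts, Finpartition B} {p₂ : ∀ B ∈ σ₂.parts, Finpartition B}
    (hp : ∀ B (h1 : B ∈ σ₁.parts) (h2 : B ∈ σ₂.parts), p₁ B h1 = p₂ B h2) : HEq p₁ p₂ := by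
  subst h
  exact heq_of_eq (by funext B hB; exact hp B hB hB)

theorem sum_reindex {R : Type*} [CommRing R] (G : Finset α → R) :
    ∑ x ∈ ((univ : Finset (Finpartition s)).sigma
        fun σ : Finpartition s => σ.parts.pi fun B => (univ : Finset (Finpartition B))),
      ∏ B ∈ x.1.parts.attach,
        (mval R ((x.2 B.1 B.2).parts.card) * ∏ C ∈ (x.2 B.1 B.2).parts, G C)
      = ∑ y ∈ ((univ : Finset (Finpartition s)).sigma
          fun ρ : Finpartition s => (univ : Finset (Finpartition ρ.parts))),
        (∏ P ∈ y.2.parts, mval R P.card) * ∏ C ∈ y.1.parts, G C := by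
  refine Finset.sum_nbij'
    (fun x => ⟨x.1.bind x.2, πof x.1 x.2⟩)
    (fun y => ⟨σof y.1 y.2, fun B hB => pof y.1 (sup_filter_of_mem y.1 y.2 hB)⟩)
    (fun x _ => by simp) (fun y _ => by simp [Finset.mem_pi]) ?_ ?_ ?_
  · -- left inverse
    rintro ⟨σ, p⟩ -
    have h1 : σof (σ.bind p) (πof σ p) = σ :=
      Finpartition.ext (by rw [σof_parts, image_sup_πof])
    refine Sigma.ext h1 (pi_heq h1 fun B hB1 hB2 => ?_)
    refine Finpartition.ext ?_
    rw [pof_parts, ← parts_p_eq_filter σ p hB2]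
  · -- right inverse
    rintro ⟨ρ, π⟩ -
    set σ := σof ρ π with hσ
    set p : ∀ B ∈ σ.parts, Finpartition B :=
      fun B hB => pof ρ (sup_filter_of_mem ρ π hB) with hp
    have hbind : σ.bind p = ρ := by
      refine Finpartition.ext ?_
      rw [Finpartition.bind_parts]
      ext C
      rw [mem_biUnion]
      constructor
      · rintro ⟨B, -, hC⟩
        exact (mem_filter.1 hC).1
      · intro hC
        obtain ⟨Q, hQ, hCQ⟩ := π.exists_mem hC
        have hB : Q.sup id ∈ σ.parts := mem_image.2 ⟨Q, hQ, rfl⟩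
        exact ⟨⟨Q.sup id, hB⟩, mem_attach _ _,
          mem_filter.2 ⟨hC, Finset.le_sup (f := id) hCQ⟩⟩
    have hπ : (πof σ p).parts = π.parts := by
      rw [πof_parts]
      ext P
      constructor
      · intro hP
        obtain ⟨B, -, rfl⟩ := mem_image.1 hP
        obtain ⟨Q, hQ, hQB⟩ := mem_image.1 B.2
        have : (p B.1 B.2).parts = Q := by
          rw [hp, pof_parts, ← hQB, filter_eq_of_mem ρ π hQ]
        rw [this]
        exact hQ
      · intro hP
        have hB : P.sup id ∈ σ.parts := mem_image.2 ⟨P, hP, rfl⟩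
        refine mem_image.2 ⟨⟨P.sup id, hB⟩, mem_attach _ _, ?_⟩
        rw [hp, pof_parts, filter_eq_of_mem ρ π hP]
    exact Sigma.ext hbind (finpartition_heq (congrArg Finpartition.parts hbind) hπ)
  · rintro ⟨σ, p⟩ -
    exact weight_eq G σ p


end CumulantAux

set_option maxHeartbeats 1600000 in
open CumulantAux in
/-- **Inversion formula for cumulants** (Proposition 2.1).
If for every nonempty subset `A` of `s` the cumulant `g A` is defined from the
correlation functions `G` by
`g A = ∑_{σ ∈ P(A)} (−1)^{|σ|−1} (|σ|−1)! ∏_{B ∈ σ} G B`,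
then `G s = ∑_{σ ∈ P(s)} ∏_{B ∈ σ} g B`. -/
theorem cumulant_inversion_formula {α : Type*} [DecidableEq α] {R : Type*} [CommRing R]
    (s : Finset α) (hs : s.Nonempty) (G : Finset α → R) (g : Finset α → R)
    (hg : ∀ A : Finset α, A ⊆ s → A.Nonempty →
      g A = ∑ σ : Finpartition A,
        (-1 : R) ^ (σ.parts.card - 1) * ((Nat.factorial (σ.parts.card - 1) : ℕ) : R) * ∏ B ∈ σ.parts, G B) :
    G s = ∑ σ : Finpartition s, ∏ B ∈ σ.parts, g B := by
  have hsne : s ≠ ⊥ := by rw [Finset.bot_eq_empty]; exact hs.ne_empty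
  symm
  calc ∑ σ : Finpartition s, ∏ B ∈ σ.parts, g B
      = ∑ σ : Finpartition s, ∏ B ∈ σ.parts,
          ∑ τ ∈ (univ : Finset (Finpartition B)),
            mval R τ.parts.card * ∏ C ∈ τ.parts, G C := by
        refine Finset.sum_congr rfl fun σ _ => Finset.prod_congr rfl fun B hB => ?_
        rw [hg B (σ.le hB) (σ.nonempty_of_mem_parts hB)]
        exact Finset.sum_congr rfl fun τ _ => by simp only [mval]
    _ = ∑ σ : Finpartition s, ∑ p ∈ σ.parts.pi fun B => (univ : Finset (Finpartition B)),
          ∏ B ∈ σ.parts.attach,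
            (mval R ((p B.1 B.2).parts.card) * ∏ C ∈ (p B.1 B.2).parts, G C) := by
        refine Finset.sum_congr rfl fun σ _ => ?_
        exact Finset.prod_sum σ.parts (fun B => (univ : Finset (Finpartition B)))
          (fun B τ => mval R τ.parts.card * ∏ C ∈ τ.parts, G C)
    _ = ∑ x ∈ ((univ : Finset (Finpartition s)).sigma
          fun σ : Finpartition s => σ.parts.pi fun B => (univ : Finset (Finpartition B))),
          ∏ B ∈ x.1.parts.attach,
            (mval R ((x.2 B.1 B.2).parts.card) * ∏ C ∈ (x.2 B.1 B.2).parts, G C) :=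
        Finset.sum_sigma' (univ : Finset (Finpartition s))
          (fun σ : Finpartition s => σ.parts.pi fun B => (univ : Finset (Finpartition B)))
          (fun σ p => ∏ B ∈ σ.parts.attach,
            (mval R ((p B.1 B.2).parts.card) * ∏ C ∈ (p B.1 B.2).parts, G C))
    _ = ∑ y ∈ ((univ : Finset (Finpartition s)).sigma
          fun ρ : Finpartition s => (univ : Finset (Finpartition ρ.parts))),
          (∏ P ∈ y.2.parts, mval R P.card) * ∏ C ∈ y.1.parts, G C := sum_reindex G
    _ = ∑ ρ : Finpartition s, ∑ π ∈ (univ : Finset (Finpartition ρ.parts)),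
          (∏ P ∈ π.parts, mval R P.card) * ∏ C ∈ ρ.parts, G C :=
        Finset.sum_sigma (univ : Finset (Finpartition s))
          (fun ρ : Finpartition s => (univ : Finset (Finpartition ρ.parts)))
          (fun y => (∏ P ∈ y.2.parts, mval R P.card) * ∏ C ∈ y.1.parts, G C)
    _ = ∑ ρ : Finpartition s,
          (if ρ.parts.card ≤ 1 then (1 : R) else 0) * ∏ C ∈ ρ.parts, G C := by
        refine Finset.sum_congr rfl fun ρ _ => ?_
        rw [← Finset.sum_mul, sum_mval]
    _ = G s := by
        set ρ₀ : Finpartition s := Finpartition.indiscrete hsne with hρ₀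
        have hiff : ∀ ρ : Finpartition s, ρ.parts.card ≤ 1 ↔ ρ = ρ₀ := by
          intro ρ
          constructor
          · intro h
            obtain ⟨B, hB⟩ := ρ.parts_nonempty hsne
            have hc1 : ρ.parts.card = 1 := le_antisymm h (Finset.card_pos.2 ⟨B, hB⟩)
            obtain ⟨C, hC⟩ := Finset.card_eq_one.1 hc1
            have hCs : C = s := by
              rw [← ρ.sup_parts, hC, Finset.sup_singleton]; rfl
            refine Finpartition.ext ?_
            rw [hC, hCs, hρ₀, Finpartition.indiscrete_parts]
          · rintro rfl
            rw [hρ₀, Finpartition.indiscrete_parts, Finset.card_singleton]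
        rw [Finset.sum_congr rfl fun ρ _ => by
          rw [if_congr (hiff ρ) rfl rfl, ite_mul, one_mul, zero_mul]]
        rw [Finset.sum_ite_eq' univ ρ₀ fun ρ => ∏ C ∈ ρ.parts, G C,
          if_pos (mem_univ _), hρ₀, Finpartition.indiscrete_parts, Finset.prod_singleton]
end

section
/- Let β > 0 and let R : ℝ³ → ℝ be bounded and measurable. For v ∈ ℝ³ define the gain operator K̂R(v) := ∫_{ℝ³} ∫_{𝕊²} ⟨v_c − v, ω⟩_+ M_β(v_c) M_β(v)^{1/2} M_β(v')^{−1/2} R(v') dω dv_c, where v' := v − ⟨v − v_c, ω⟩ω. Then K̂R admits the integral-kernel representation K̂R(v) = √(β/(2π)) ∫_{ℝ³} (R(η)/|η − v|) exp( −β [ |η − v|²/8 + (|η|² − |v|²)²/(8|η − v|²) ] ) dη for every v ∈ ℝ³ with v ≠ η on a null set (the formula holding for all v). -/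
open scoped RealInnerProductSpace
open MeasureTheory

/-- The Maxwellian equilibrium distribution `M_β` on `ℝ³`. -/
noncomputable def Maxwellian3 (β : ℝ) (v : EuclideanSpace ℝ (Fin 3)) : ℝ :=
  (β / (2 * Real.pi)) ^ ((3 : ℝ) / 2) * Real.exp (-(β / 2) * ‖v‖ ^ 2)

/-- The gain operator `K̂` of the linear Rayleigh–Boltzmann equation after the
symmetrizing change of unknown `R = M_β^{1/2} φ`:
`K̂R(v) = ∫∫ ⟨v_c − v, ω⟩₊ M_β(v_c) M_β(v)^{1/2} M_β(v')^{−1/2} R(v') dω dv_c`,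
where `v' = v − ⟨v − v_c, ω⟩ω`. -/
noncomputable def gainOp (β : ℝ) (R : EuclideanSpace ℝ (Fin 3) → ℝ)
    (v : EuclideanSpace ℝ (Fin 3)) : ℝ :=
  ∫ vc : EuclideanSpace ℝ (Fin 3),
    ∫ ω : Metric.sphere (0 : EuclideanSpace ℝ (Fin 3)) 1,
      max ⟪vc - v, (ω : EuclideanSpace ℝ (Fin 3))⟫ 0 * Maxwellian3 β vc
        * (Maxwellian3 β v) ^ ((1 : ℝ) / 2)
        * (Maxwellian3 β (v - ⟪v - vc, (ω : EuclideanSpace ℝ (Fin 3))⟫ •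
            (ω : EuclideanSpace ℝ (Fin 3)))) ^ (-((1 : ℝ) / 2))
        * R (v - ⟪v - vc, (ω : EuclideanSpace ℝ (Fin 3))⟫ •
            (ω : EuclideanSpace ℝ (Fin 3)))
      ∂((volume : Measure (EuclideanSpace ℝ (Fin 3))).toSphere)

namespace GainOpAux

open Real Set Metric

local notation "E3" => EuclideanSpace ℝ (Fin 3)

lemma maxwellian3_pos {β : ℝ} (hβ : 0 < β) (x : E3) : 0 < Maxwellian3 β x := by
  have : (0:ℝ) < β / (2*π) := div_pos hβ (by positivity)
  exact mul_pos (Real.rpow_pos_of_pos this _) (Real.exp_pos _)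

lemma maxwellian3_rpow {β : ℝ} (hβ : 0 < β) (x : E3) (p : ℝ) :
    Maxwellian3 β x ^ p = (β/(2*π)) ^ ((3:ℝ)/2 * p) * Real.exp (-(β/2) * ‖x‖^2 * p) := by
  have h : (0:ℝ) < β / (2*π) := div_pos hβ (by positivity)
  rw [Maxwellian3, Real.mul_rpow (Real.rpow_nonneg h.le _) (Real.exp_pos _).le,
    ← Real.rpow_mul h.le, ← Real.exp_mul]

lemma integrable_exp_neg_norm_sq {c : ℝ} (hc : 0 < c) :
    Integrable (fun x : E3 => Real.exp (-c * ‖x‖^2)) := by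
  have h := (GaussianFourier.integrable_cexp_neg_mul_sq_norm_add (V := E3) (b := (c:ℂ))
    (by simpa using hc) 0 0).norm
  refine h.congr ?_
  filter_upwards with x
  rw [Complex.norm_exp]
  norm_num [Complex.add_re, Complex.mul_re]
  left
  norm_cast

lemma marginal3 {β : ℝ} (hβ : 0 < β) (v ω : E3) (hω : ‖ω‖ = 1) (f : ℝ → ℝ) :
    ∫ w : E3, f ⟪w, ω⟫ * Real.exp (-(β/2) * ‖v + w‖^2)
      = (2*π/β) * ∫ t : ℝ, f t * Real.exp (-(β/2) * (⟪v, ω⟫ + t)^2) := by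
  classical
  have hcard : Module.finrank ℝ E3 = Fintype.card (Fin 3) := by
    simp [finrank_euclideanSpace]
  have horth : Orthonormal ℝ (({0} : Set (Fin 3)).restrict (fun _ : Fin 3 => ω)) := by
    rw [orthonormal_iff_ite]
    intro i j
    have hij : i = j := Subsingleton.elim i j
    subst hij
    rw [if_pos rfl]
    show (⟪ω, ω⟫ : ℝ) = 1
    rw [real_inner_self_eq_norm_sq, hω]
    norm_num
  obtain ⟨b, hb⟩ := Orthonormal.exists_orthonormalBasis_extension_of_card_eq hcard horth
  have hb0 : b 0 = ω := hb 0 rfl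
  have emb1 : MeasurableEmbedding (⇑b.repr.symm) :=
    b.repr.symm.toHomeomorph.measurableEmbedding
  rw [← (b.measurePreserving_repr_symm).integral_comp emb1
      (fun w => f ⟪w, ω⟫ * Real.exp (-(β/2) * ‖v + w‖^2))]
  have key : ∀ x : EuclideanSpace ℝ (Fin 3),
      f ⟪b.repr.symm x, ω⟫ * Real.exp (-(β/2) * ‖v + b.repr.symm x‖^2)
        = f (x 0) * Real.exp (-(β/2) * ‖b.repr v + x‖^2) := by
    intro x
    congr 3
    · rw [← hb0, real_inner_comm, ← b.repr_apply_apply, b.repr.apply_symm_apply]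
    · rw [← b.repr.norm_map (v + b.repr.symm x), map_add, b.repr.apply_symm_apply]
  simp only [key]
  have emb2 : MeasurableEmbedding (⇑((MeasurableEquiv.toLp 2 (Fin 3 → ℝ)).symm).symm) :=
    ((MeasurableEquiv.toLp 2 (Fin 3 → ℝ)).symm).symm.measurableEmbedding
  rw [← ((EuclideanSpace.volume_preserving_symm_measurableEquiv_toLp (Fin 3)).symm).integral_comp emb2
      (fun x => f (x 0) * Real.exp (-(β/2) * ‖b.repr v + x‖^2))]
  set c : EuclideanSpace ℝ (Fin 3) := b.repr v with hc
  have key2 : ∀ y : Fin 3 → ℝ,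
      f ((((MeasurableEquiv.toLp 2 (Fin 3 → ℝ)).symm).symm y) 0)
        * Real.exp (-(β/2) * ‖c + ((MeasurableEquiv.toLp 2 (Fin 3 → ℝ)).symm).symm y‖^2)
      = ∏ i : Fin 3,
          (if i = (0 : Fin 3) then f (y i) else 1) * Real.exp (-(β/2) * (c i + y i)^2) := by
    intro y
    have happ : ∀ i, (((MeasurableEquiv.toLp 2 (Fin 3 → ℝ)).symm).symm y) i = y i := by
      intro i
      simp [MeasurableEquiv.coe_toLp]
    have hnorm : ‖c + ((MeasurableEquiv.toLp 2 (Fin 3 → ℝ)).symm).symm y‖^2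
        = ∑ i : Fin 3, (c i + y i)^2 := by
      rw [EuclideanSpace.norm_eq, Real.sq_sqrt (by positivity)]
      refine Finset.sum_congr rfl fun i _ => ?_
      rw [PiLp.add_apply, happ, Real.norm_eq_abs, sq_abs]
    rw [hnorm, happ, Fin.prod_univ_three, Fin.sum_univ_three,
      if_pos rfl, if_neg (by decide : (1:Fin 3) ≠ 0), if_neg (by decide : (2:Fin 3) ≠ 0)]
    rw [show -(β/2) * ((c 0 + y 0)^2 + (c 1 + y 1)^2 + (c 2 + y 2)^2)
        = -(β/2) * (c 0 + y 0)^2 + (-(β/2) * (c 1 + y 1)^2 + -(β/2) * (c 2 + y 2)^2) by ring,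
      Real.exp_add, Real.exp_add]
    ring
  simp only [key2]
  rw [MeasureTheory.volume_pi, MeasureTheory.integral_fintype_prod_eq_prod
    (f := fun i t => (if i = (0 : Fin 3) then f t else 1) * Real.exp (-(β/2) * (c i + t)^2))]
  have gauss : ∀ a : ℝ, (∫ t : ℝ, Real.exp (-(β/2) * (a + t)^2)) = Real.sqrt (2*π/β) := by
    intro a
    rw [show (∫ t : ℝ, Real.exp (-(β/2) * (a + t)^2))
        = ∫ t : ℝ, Real.exp (-(β/2) * t^2) from
      MeasureTheory.integral_add_left_eq_self (fun s : ℝ => Real.exp (-(β/2) * s^2)) a,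
      integral_gaussian]
    congr 1
    field_simp
  have hc0 : c 0 = ⟪v, ω⟫ := by
    rw [hc, b.repr_apply_apply, hb0, real_inner_comm]
  rw [Fin.prod_univ_three]
  have e0 : (∫ x : ℝ, (if (0:Fin 3) = 0 then f x else 1) * Real.exp (-(β/2) * (c 0 + x)^2))
      = ∫ t : ℝ, f t * Real.exp (-(β/2) * (⟪v, ω⟫ + t)^2) := by
    rw [hc0]
    simp
  have e1 : (∫ x : ℝ, (if (1:Fin 3) = 0 then f x else 1) * Real.exp (-(β/2) * (c 1 + x)^2))
      = Real.sqrt (2*π/β) := by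
    simp only [if_neg (by decide : (1:Fin 3) ≠ 0), one_mul]
    exact gauss _
  have e2 : (∫ x : ℝ, (if (2:Fin 3) = 0 then f x else 1) * Real.exp (-(β/2) * (c 2 + x)^2))
      = Real.sqrt (2*π/β) := by
    simp only [if_neg (by decide : (2:Fin 3) ≠ 0), one_mul]
    exact gauss _
  beta_reduce
  rw [e0, e1, e2, mul_assoc, Real.mul_self_sqrt (by positivity : (0:ℝ) ≤ 2*π/β)]
  ring

lemma polar3 (f : E3 → ℝ)
    (hf : Integrable (fun p : sphere (0:E3) 1 × Ioi (0:ℝ) => f ((p.2 : ℝ) • (p.1 : E3)))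
      (((volume : Measure E3).toSphere).prod (Measure.volumeIoiPow 2))) :
    ∫ x : E3, f x
      = ∫ ω : sphere (0:E3) 1, ∫ r in Ioi (0:ℝ), r^2 * f (r • (ω : E3)) ∂volume
          ∂((volume : Measure E3).toSphere) := by
  have hfr : Module.finrank ℝ E3 = 3 := finrank_euclideanSpace_fin
  have m := Measure.measurePreserving_homeomorphUnitSphereProd (volume : Measure E3)
  rw [hfr] at m
  norm_num at m
  -- step a : full integral = integral over the complement of {0}
  have h1 : ∫ x : E3, f x
      = ∫ x : ({(0:E3)}ᶜ : Set E3), f x ∂(Measure.comap Subtype.val volume) := by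
    rw [MeasureTheory.integral_subtype_comap (measurableSet_singleton (0:E3)).compl f,
      MeasureTheory.restrict_compl_singleton]
  rw [h1]
  -- step b : change variables by the homeomorphism
  have h2 : (∫ x : ({(0:E3)}ᶜ : Set E3), f x ∂(Measure.comap Subtype.val volume))
      = ∫ p : sphere (0:E3) 1 × Ioi (0:ℝ), f ((p.2 : ℝ) • (p.1 : E3))
          ∂(((volume : Measure E3).toSphere).prod (Measure.volumeIoiPow 2)) := by
    rw [← m.integral_comp (homeomorphUnitSphereProd E3).measurableEmbedding
        (fun p : sphere (0:E3) 1 × Ioi (0:ℝ) => f ((p.2 : ℝ) • (p.1 : E3)))]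
    refine integral_congr_ae (Filter.Eventually.of_forall fun x => ?_)
    have hx : (x : E3) ≠ 0 := x.2
    simp only [homeomorphUnitSphereProd_apply_snd_coe, homeomorphUnitSphereProd_apply_fst_coe]
    rw [smul_inv_smul₀ (norm_ne_zero_iff.mpr hx)]
  rw [h2]
  -- step c : Fubini on the product
  rw [MeasureTheory.integral_prod _ hf]
  -- step d : identify the inner integral
  refine integral_congr_ae (Filter.Eventually.of_forall fun ω => ?_)
  show (∫ y : Ioi (0:ℝ), f ((y:ℝ) • (ω:E3)) ∂(Measure.volumeIoiPow 2))
      = ∫ r in Ioi (0:ℝ), r^2 * f (r • (ω:E3))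
  have hdens : (fun r : Ioi (0:ℝ) => ENNReal.ofReal ((r:ℝ)^2))
      = fun r : Ioi (0:ℝ) => (((((r:ℝ)^2).toNNReal) : NNReal) : ENNReal) := rfl
  rw [Measure.volumeIoiPow, hdens,
    integral_withDensity_eq_integral_smul
      (by fun_prop : Measurable fun r : Ioi (0:ℝ) => (((r:ℝ)^2).toNNReal)) _]
  rw [← MeasureTheory.integral_subtype_comap measurableSet_Ioi
      (fun r : ℝ => r^2 * f (r • (ω : E3)))]
  refine integral_congr_ae (Filter.Eventually.of_forall fun r => ?_)
  show ((r:ℝ)^2).toNNReal • f ((r:ℝ) • (ω:E3)) = (r:ℝ)^2 * f ((r:ℝ) • (ω:E3))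
  rw [NNReal.smul_def, Real.coe_toNNReal _ (sq_nonneg _), smul_eq_mul]

lemma perOmega {β : ℝ} (hβ : 0 < β) (R : E3 → ℝ) (v ω : E3) (hω : ‖ω‖ = 1) :
    (∫ w : E3, max ⟪w, ω⟫ 0 * Maxwellian3 β (v + w)
        * Maxwellian3 β v ^ ((1:ℝ)/2)
        * Maxwellian3 β (v + ⟪w, ω⟫ • ω) ^ (-((1:ℝ)/2))
        * R (v + ⟪w, ω⟫ • ω))
      = Real.sqrt (β/(2*π)) * ∫ r in Ioi (0:ℝ),
          r^2 * (R (v + r • ω) / ‖r • ω‖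
            * Real.exp (-β * (‖r • ω‖^2/8 + (‖v + r • ω‖^2 - ‖v‖^2)^2/(8*‖r • ω‖^2)))) := by
  have hP : (0:ℝ) < β/(2*π) := div_pos hβ (by positivity)
  set f : ℝ → ℝ := fun t => max t 0 * Maxwellian3 β v ^ ((1:ℝ)/2)
      * Maxwellian3 β (v + t • ω) ^ (-((1:ℝ)/2)) * R (v + t • ω) with hf
  have step1 : (∫ w : E3, max ⟪w, ω⟫ 0 * Maxwellian3 β (v + w)
        * Maxwellian3 β v ^ ((1:ℝ)/2)
        * Maxwellian3 β (v + ⟪w, ω⟫ • ω) ^ (-((1:ℝ)/2))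
        * R (v + ⟪w, ω⟫ • ω))
      = (∫ w : E3, f ⟪w, ω⟫ * Real.exp (-(β/2) * ‖v + w‖^2)) * ((β/(2*π)) ^ ((3:ℝ)/2)) := by
    rw [← integral_mul_const]
    refine integral_congr_ae (Filter.Eventually.of_forall fun w => ?_)
    show max ⟪w, ω⟫ 0 * Maxwellian3 β (v + w) * Maxwellian3 β v ^ ((1:ℝ)/2)
        * Maxwellian3 β (v + ⟪w, ω⟫ • ω) ^ (-((1:ℝ)/2)) * R (v + ⟪w, ω⟫ • ω)
      = f ⟪w, ω⟫ * Real.exp (-(β/2) * ‖v + w‖^2) * ((β/(2*π)) ^ ((3:ℝ)/2))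
    rw [hf]
    rw [show Maxwellian3 β (v + w)
        = (β/(2*π)) ^ ((3:ℝ)/2) * Real.exp (-(β/2) * ‖v + w‖^2) from rfl]
    ring
  rw [step1, marginal3 hβ v ω hω f]
  have hsupp : (∫ t : ℝ, f t * Real.exp (-(β/2) * (⟪v, ω⟫ + t)^2))
      = ∫ t in Ioi (0:ℝ), f t * Real.exp (-(β/2) * (⟪v, ω⟫ + t)^2) := by
    refine (MeasureTheory.setIntegral_eq_integral_of_forall_compl_eq_zero fun t htnot => ?_).symm
    have ht : t ≤ 0 := by simpa using htnot
    rw [hf]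
    simp [max_eq_right ht]
  rw [hsupp, ← MeasureTheory.integral_const_mul (2*π/β), ← integral_mul_const,
    ← MeasureTheory.integral_const_mul (Real.sqrt (β/(2*π)))]
  refine MeasureTheory.setIntegral_congr_fun measurableSet_Ioi fun t ht => ?_
  have ht' : (0:ℝ) < t := ht
  have hts : ‖t • ω‖ = t := by
    rw [norm_smul, Real.norm_eq_abs, abs_of_pos ht', hω, mul_one]
  have hn : ‖v + t • ω‖^2 = ‖v‖^2 + 2*t*⟪v, ω⟫ + t^2 := by
    rw [@norm_add_sq_real, real_inner_smul_right, norm_smul, Real.norm_eq_abs,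
      abs_of_pos ht', hω, mul_one]
    ring
  have hA : (2*π/β) * (β/(2*π)) ^ ((3:ℝ)/2) = (β/(2*π)) ^ ((1:ℝ)/2) := by
    rw [← inv_div β (2*π), ← Real.rpow_neg_one (β/(2*π)), ← Real.rpow_add hP]
    norm_num
  have h34 : Maxwellian3 β v ^ ((1:ℝ)/2) * Maxwellian3 β (v + t • ω) ^ (-((1:ℝ)/2))
      = Real.exp (-(β/2) * ‖v‖^2 * (1/2) + -(β/2) * ‖v + t • ω‖^2 * (-(1/2))) := by
    rw [maxwellian3_rpow hβ, maxwellian3_rpow hβ, Real.exp_add, mul_mul_mul_comm,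
      ← Real.rpow_add hP]
    norm_num
  have hExp : Real.exp (-(β/2) * ‖v‖^2 * (1/2) + -(β/2) * ‖v + t • ω‖^2 * (-(1/2)))
        * Real.exp (-(β/2) * (⟪v, ω⟫ + t)^2)
      = Real.exp (-β * (t^2/8 + (‖v + t • ω‖^2 - ‖v‖^2)^2/(8*t^2))) := by
    rw [← Real.exp_add]
    congr 1
    rw [hn]
    field_simp
    ring
  show (2*π/β) * (f t * Real.exp (-(β/2) * (⟪v, ω⟫ + t)^2)) * ((β/(2*π)) ^ ((3:ℝ)/2))
      = Real.sqrt (β/(2*π)) * (t^2 * (R (v + t • ω) / ‖t • ω‖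
          * Real.exp (-β * (‖t • ω‖^2/8 + (‖v + t • ω‖^2 - ‖v‖^2)^2/(8*‖t • ω‖^2)))))
  rw [hf]
  calc (2*π/β) * ((max t 0 * Maxwellian3 β v ^ ((1:ℝ)/2)
          * Maxwellian3 β (v + t • ω) ^ (-((1:ℝ)/2)) * R (v + t • ω))
          * Real.exp (-(β/2) * (⟪v, ω⟫ + t)^2)) * ((β/(2*π)) ^ ((3:ℝ)/2))
      = ((2*π/β) * ((β/(2*π)) ^ ((3:ℝ)/2)))
          * ((Maxwellian3 β v ^ ((1:ℝ)/2) * Maxwellian3 β (v + t • ω) ^ (-((1:ℝ)/2)))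
            * Real.exp (-(β/2) * (⟪v, ω⟫ + t)^2)) * (t * R (v + t • ω)) := by
        rw [max_eq_left ht'.le]
        ring
    _ = ((β/(2*π)) ^ ((1:ℝ)/2))
          * Real.exp (-β * (t^2/8 + (‖v + t • ω‖^2 - ‖v‖^2)^2/(8*t^2))) * (t * R (v + t • ω)) := by
        rw [hA, h34, hExp]
    _ = Real.sqrt (β/(2*π)) * (t^2 * (R (v + t • ω) / ‖t • ω‖
          * Real.exp (-β * (‖t • ω‖^2/8 + (‖v + t • ω‖^2 - ‖v‖^2)^2/(8*‖t • ω‖^2))))) := by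
        rw [hts, Real.sqrt_eq_rpow]
        field_simp

lemma integrable_polar_side {β : ℝ} (hβ : 0 < β) (R : E3 → ℝ) (hRmeas : Measurable R)
    {C : ℝ} (hC : ∀ x, |R x| ≤ C) (v : E3) :
    Integrable (fun p : sphere (0:E3) 1 × Ioi (0:ℝ) =>
      R (v + (p.2 : ℝ) • (p.1 : E3)) / ‖(p.2 : ℝ) • (p.1 : E3)‖
        * Real.exp (-β * (‖(p.2 : ℝ) • (p.1 : E3)‖^2/8
            + (‖v + (p.2 : ℝ) • (p.1 : E3)‖^2 - ‖v‖^2)^2/(8*‖(p.2 : ℝ) • (p.1 : E3)‖^2))))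
      (((volume : Measure E3).toSphere).prod (Measure.volumeIoiPow 2)) := by
  have hC0 : 0 ≤ C := le_trans (abs_nonneg _) (hC 0)
  -- measurability
  have hT : Continuous (fun p : sphere (0:E3) 1 × Ioi (0:ℝ) => (p.2 : ℝ) • (p.1 : E3)) :=
    (continuous_subtype_val.comp continuous_snd).smul
      (continuous_subtype_val.comp continuous_fst)
  have hmeas0 : Measurable (fun u : E3 => R (v + u) / ‖u‖
      * Real.exp (-β * (‖u‖^2/8 + (‖v + u‖^2 - ‖v‖^2)^2/(8*‖u‖^2)))) := by
    have h1 : Measurable fun u : E3 => R (v + u) :=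
      hRmeas.comp (measurable_const.add measurable_id)
    have h2 : Measurable fun u : E3 => ‖u‖ := measurable_norm
    have h3 : Measurable fun u : E3 => ‖v + u‖ :=
      measurable_norm.comp (measurable_const.add measurable_id)
    exact (h1.div h2).mul ((((h2.pow_const 2).div_const 8).add
      ((((h3.pow_const 2).sub_const (‖v‖^2)).pow_const 2).div
        ((h2.pow_const 2).const_mul 8))).const_mul (-β)).exp
  -- integrable dominating function
  have hg : Integrable (fun r : Ioi (0:ℝ) => C * Real.exp (-(β/8) * (r:ℝ)^2) / (r:ℝ))
      (Measure.volumeIoiPow 2) := by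
    rw [Measure.volumeIoiPow]
    rw [integrable_withDensity_iff (by fun_prop) (Filter.Eventually.of_forall fun r =>
      ENNReal.ofReal_lt_top)]
    have : Integrable ((fun x : ℝ => C * Real.exp (-(β/8) * x^2) / x
        * (ENNReal.ofReal (x^2)).toReal) ∘ (Subtype.val : Ioi (0:ℝ) → ℝ))
        (Measure.comap Subtype.val volume) := by
      rw [← MeasurableEmbedding.integrable_map_iff
        (MeasurableEmbedding.subtype_coe measurableSet_Ioi),
        map_comap_subtype_coe measurableSet_Ioi _]
      refine IntegrableOn.congr_fun
        (((integrable_mul_exp_neg_mul_sq (show (0:ℝ) < β/8 by positivity)).const_mul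
          C).integrableOn) (fun x hx => ?_) measurableSet_Ioi
      have hx0 : (0:ℝ) < x := hx
      rw [ENNReal.toReal_ofReal (sq_nonneg x)]
      field_simp
    exact this
  refine Integrable.mono'
    (g := fun p : sphere (0:E3) 1 × Ioi (0:ℝ) =>
      C * Real.exp (-(β/8) * ((p.2 : ℝ))^2) / (p.2 : ℝ)) ?_
    ((hmeas0.comp hT.measurable).aestronglyMeasurable)
    (Filter.Eventually.of_forall fun p => ?_)
  · have h1 : Integrable (fun _ : sphere (0:E3) 1 => (1:ℝ))
        ((volume : Measure E3).toSphere) := integrable_const 1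
    have := h1.mul_prod hg
    refine this.congr (Filter.Eventually.of_forall fun p => ?_)
    simp
  · beta_reduce
    set r : ℝ := (p.2 : ℝ) with hr
    have hr0 : 0 < r := p.2.2
    have hω1 : ‖(p.1 : E3)‖ = 1 := by
      have := p.1.2
      rwa [mem_sphere_zero_iff_norm] at this
    have hnr : ‖r • (p.1 : E3)‖ = r := by
      rw [norm_smul, Real.norm_eq_abs, abs_of_pos hr0, hω1, mul_one]
    rw [Real.norm_eq_abs, abs_mul, abs_div, hnr, abs_of_pos hr0,
      abs_of_pos (Real.exp_pos _)]
    rw [div_mul_eq_mul_div, div_le_div_iff₀ hr0 hr0]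
    apply mul_le_mul_of_nonneg_right _ hr0.le
    have hRle := hC (v + r • (p.1 : E3))
    have hexp : Real.exp (-β * (r^2/8
        + (‖v + r • (p.1 : E3)‖^2 - ‖v‖^2)^2/(8*r^2)))
        ≤ Real.exp (-(β/8) * r^2) := by
      rw [Real.exp_le_exp]
      have hq : 0 ≤ (‖v + r • (p.1 : E3)‖^2 - ‖v‖^2)^2/(8*r^2) := by positivity
      nlinarith
    exact mul_le_mul hRle hexp (Real.exp_pos _).le hC0

lemma pointwise_bound {β : ℝ} (hβ : 0 < β) (R : E3 → ℝ) {C : ℝ} (hC : ∀ x, |R x| ≤ C)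
    (v w ω : E3) (hω : ‖ω‖ = 1) :
    |max ⟪w, ω⟫ 0 * Maxwellian3 β (v + w) * Maxwellian3 β v ^ ((1:ℝ)/2)
      * Maxwellian3 β (v + ⟪w, ω⟫ • ω) ^ (-((1:ℝ)/2)) * R (v + ⟪w, ω⟫ • ω)|
    ≤ ((β/(2*π)) ^ ((3:ℝ)/2) * Maxwellian3 β v ^ ((1:ℝ)/2)
        * (β/(2*π)) ^ ((3:ℝ)/2 * -((1:ℝ)/2)) * C * Real.exp ((9/2)*β*‖v‖^2) * (1+16/β))
      * Real.exp (-(β/16) * ‖w‖^2) := by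
  have hC0 : 0 ≤ C := le_trans (abs_nonneg _) (hC 0)
  have hP : (0:ℝ) < β/(2*π) := div_pos hβ (by positivity)
  have hMpos : ∀ x : E3, 0 < Maxwellian3 β x := maxwellian3_pos hβ
  have habs : |⟪w, ω⟫| ≤ ‖w‖ := by
    simpa [hω] using abs_real_inner_le_norm w ω
  have h1 : max ⟪w, ω⟫ 0 ≤ ‖w‖ := max_le (le_trans (le_abs_self _) habs) (norm_nonneg w)
  have h2 : Maxwellian3 β (v + w)
      ≤ (β/(2*π)) ^ ((3:ℝ)/2) * Real.exp (-(β/2) * (‖w‖ - ‖v‖)^2) := by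
    have h := abs_norm_sub_norm_le w (-v)
    rw [norm_neg, sub_neg_eq_add] at h
    have h' : |‖w‖ - ‖v‖| ≤ ‖v + w‖ := by rwa [add_comm w v] at h
    have hle : (‖w‖ - ‖v‖)^2 ≤ ‖v + w‖^2 := by
      rw [← sq_abs (‖w‖ - ‖v‖)]
      exact pow_le_pow_left₀ (abs_nonneg _) h' 2
    rw [show Maxwellian3 β (v + w)
        = (β/(2*π)) ^ ((3:ℝ)/2) * Real.exp (-(β/2) * ‖v + w‖^2) from rfl]
    apply mul_le_mul_of_nonneg_left _ (Real.rpow_nonneg hP.le _)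
    rw [Real.exp_le_exp]
    nlinarith
  have h3 : Maxwellian3 β (v + ⟪w, ω⟫ • ω) ^ (-((1:ℝ)/2))
      ≤ (β/(2*π)) ^ ((3:ℝ)/2 * -((1:ℝ)/2))
        * Real.exp (-(β/2) * (‖v‖ + ‖w‖)^2 * (-(1/2))) := by
    rw [maxwellian3_rpow hβ]
    apply mul_le_mul_of_nonneg_left _ (Real.rpow_nonneg hP.le _)
    rw [Real.exp_le_exp]
    have hle : ‖v + ⟪w, ω⟫ • ω‖ ≤ ‖v‖ + ‖w‖ := by
      calc ‖v + ⟪w, ω⟫ • ω‖ ≤ ‖v‖ + ‖⟪w, ω⟫ • ω‖ := norm_add_le _ _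
        _ ≤ ‖v‖ + ‖w‖ := by
            rw [norm_smul, Real.norm_eq_abs, hω, mul_one]
            linarith
    have hsq : ‖v + ⟪w, ω⟫ • ω‖^2 ≤ (‖v‖ + ‖w‖)^2 :=
      pow_le_pow_left₀ (norm_nonneg _) hle 2
    nlinarith
  have h4 := hC (v + ⟪w, ω⟫ • ω)
  rw [abs_mul, abs_mul, abs_mul, abs_mul, abs_of_nonneg (le_max_right _ _),
    abs_of_pos (hMpos _), abs_of_pos (Real.rpow_pos_of_pos (hMpos _) _),
    abs_of_pos (Real.rpow_pos_of_pos (hMpos _) _)]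
  have hcore : ‖w‖ * (Real.exp (-(β/2) * (‖w‖ - ‖v‖)^2)
        * Real.exp (-(β/2) * (‖v‖ + ‖w‖)^2 * (-(1/2))))
      ≤ (Real.exp ((9/2)*β*‖v‖^2) * (1+16/β)) * Real.exp (-(β/16) * ‖w‖^2) := by
    have hx : (0:ℝ) ≤ ‖w‖ := norm_nonneg w
    have e12 : Real.exp (-(β/2) * (‖w‖ - ‖v‖)^2)
          * Real.exp (-(β/2) * (‖v‖ + ‖w‖)^2 * (-(1/2)))
        ≤ Real.exp ((9/2)*β*‖v‖^2) * Real.exp (-(β/8) * ‖w‖^2) := by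
      rw [← Real.exp_add, ← Real.exp_add, Real.exp_le_exp]
      nlinarith [mul_nonneg hβ.le (sq_nonneg (‖w‖ - 6*‖v‖))]
    have hxe : ‖w‖ * Real.exp (-(β/8) * ‖w‖^2)
        ≤ (1+16/β) * Real.exp (-(β/16) * ‖w‖^2) := by
      have he : (β/16)*‖w‖^2 + 1 ≤ Real.exp ((β/16)*‖w‖^2) := by
        have := Real.add_one_le_exp ((β/16)*‖w‖^2)
        linarith
      have hb16 : (16/β) * (β/16) = 1 := by field_simp
      have hxb : ‖w‖ ≤ (1+16/β) * Real.exp ((β/16)*‖w‖^2) := by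
        have ha : ‖w‖ ≤ 1 + ‖w‖^2 := by nlinarith [sq_nonneg (‖w‖-1)]
        have hb : 1 + ‖w‖^2 ≤ (1+16/β) * ((β/16)*‖w‖^2 + 1) := by
          have h16 : (0:ℝ) < 16/β := by positivity
          nlinarith [mul_nonneg (mul_nonneg h16.le hβ.le) (sq_nonneg ‖w‖)]
        calc ‖w‖ ≤ 1 + ‖w‖^2 := ha
          _ ≤ (1+16/β) * ((β/16)*‖w‖^2 + 1) := hb
          _ ≤ (1+16/β) * Real.exp ((β/16)*‖w‖^2) := by
              apply mul_le_mul_of_nonneg_left he (by positivity)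
      calc ‖w‖ * Real.exp (-(β/8) * ‖w‖^2)
          ≤ ((1+16/β) * Real.exp ((β/16)*‖w‖^2)) * Real.exp (-(β/8) * ‖w‖^2) :=
            mul_le_mul_of_nonneg_right hxb (Real.exp_pos _).le
        _ = (1+16/β) * Real.exp (-(β/16) * ‖w‖^2) := by
            rw [mul_assoc, ← Real.exp_add]
            congr 2
            ring
    calc ‖w‖ * (Real.exp (-(β/2) * (‖w‖ - ‖v‖)^2)
          * Real.exp (-(β/2) * (‖v‖ + ‖w‖)^2 * (-(1/2))))
        ≤ ‖w‖ * (Real.exp ((9/2)*β*‖v‖^2) * Real.exp (-(β/8) * ‖w‖^2)) :=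
          mul_le_mul_of_nonneg_left e12 hx
      _ = Real.exp ((9/2)*β*‖v‖^2) * (‖w‖ * Real.exp (-(β/8) * ‖w‖^2)) := by ring
      _ ≤ Real.exp ((9/2)*β*‖v‖^2) * ((1+16/β) * Real.exp (-(β/16) * ‖w‖^2)) :=
          mul_le_mul_of_nonneg_left hxe (Real.exp_pos _).le
      _ = (Real.exp ((9/2)*β*‖v‖^2) * (1+16/β)) * Real.exp (-(β/16) * ‖w‖^2) := by ring
  calc max ⟪w, ω⟫ 0 * Maxwellian3 β (v + w) * Maxwellian3 β v ^ ((1:ℝ)/2)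
        * Maxwellian3 β (v + ⟪w, ω⟫ • ω) ^ (-((1:ℝ)/2)) * |R (v + ⟪w, ω⟫ • ω)|
      ≤ ‖w‖ * ((β/(2*π)) ^ ((3:ℝ)/2) * Real.exp (-(β/2) * (‖w‖ - ‖v‖)^2))
          * Maxwellian3 β v ^ ((1:ℝ)/2)
          * ((β/(2*π)) ^ ((3:ℝ)/2 * -((1:ℝ)/2))
            * Real.exp (-(β/2) * (‖v‖ + ‖w‖)^2 * (-(1/2)))) * C := by
        gcongr <;>
          first
            | exact (hMpos _).le
            | exact (Real.rpow_pos_of_pos (hMpos _) _).le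
            | exact mul_nonneg (Real.rpow_nonneg hP.le _) (Real.exp_pos _).le
            | exact mul_nonneg (mul_nonneg (mul_nonneg (norm_nonneg _)
                (mul_nonneg (Real.rpow_nonneg hP.le _) (Real.exp_pos _).le))
                (Real.rpow_nonneg (hMpos _).le _))
                (mul_nonneg (Real.rpow_nonneg hP.le _) (Real.exp_pos _).le)
            | exact mul_nonneg (mul_nonneg (norm_nonneg _)
                (mul_nonneg (Real.rpow_nonneg hP.le _) (Real.exp_pos _).le))
                (Real.rpow_nonneg (hMpos _).le _)
            | positivity
    _ = ((β/(2*π)) ^ ((3:ℝ)/2) * Maxwellian3 β v ^ ((1:ℝ)/2)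
          * (β/(2*π)) ^ ((3:ℝ)/2 * -((1:ℝ)/2)) * C)
        * (‖w‖ * (Real.exp (-(β/2) * (‖w‖ - ‖v‖)^2)
          * Real.exp (-(β/2) * (‖v‖ + ‖w‖)^2 * (-(1/2))))) := by ring
    _ ≤ ((β/(2*π)) ^ ((3:ℝ)/2) * Maxwellian3 β v ^ ((1:ℝ)/2)
          * (β/(2*π)) ^ ((3:ℝ)/2 * -((1:ℝ)/2)) * C)
        * ((Real.exp ((9/2)*β*‖v‖^2) * (1+16/β)) * Real.exp (-(β/16) * ‖w‖^2)) := by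
        apply mul_le_mul_of_nonneg_left hcore
        exact mul_nonneg (mul_nonneg (mul_nonneg (Real.rpow_nonneg hP.le _)
          (Real.rpow_nonneg (hMpos v).le _)) (Real.rpow_nonneg hP.le _)) hC0
    _ = ((β/(2*π)) ^ ((3:ℝ)/2) * Maxwellian3 β v ^ ((1:ℝ)/2)
          * (β/(2*π)) ^ ((3:ℝ)/2 * -((1:ℝ)/2)) * C * Real.exp ((9/2)*β*‖v‖^2) * (1+16/β))
        * Real.exp (-(β/16) * ‖w‖^2) := by ring

lemma integrable_fubini_side {β : ℝ} (hβ : 0 < β) (R : E3 → ℝ) (hRmeas : Measurable R)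
    {C : ℝ} (hC : ∀ x, |R x| ≤ C) (v : E3) :
    Integrable (fun p : E3 × sphere (0:E3) 1 =>
      max ⟪p.1, (p.2 : E3)⟫ 0 * Maxwellian3 β (v + p.1)
        * Maxwellian3 β v ^ ((1:ℝ)/2)
        * Maxwellian3 β (v + ⟪p.1, (p.2 : E3)⟫ • (p.2 : E3)) ^ (-((1:ℝ)/2))
        * R (v + ⟪p.1, (p.2 : E3)⟫ • (p.2 : E3)))
      ((volume : Measure E3).prod ((volume : Measure E3).toSphere)) := by
  have hP : (0:ℝ) < β/(2*π) := div_pos hβ (by positivity)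
  have hMpos : ∀ x : E3, 0 < Maxwellian3 β x := maxwellian3_pos hβ
  have hInner : Continuous fun p : E3 × sphere (0:E3) 1 => (⟪p.1, (p.2:E3)⟫ : ℝ) :=
    continuous_fst.inner (continuous_subtype_val.comp continuous_snd)
  have hMcont : Continuous (Maxwellian3 β) := by
    show Continuous fun x : E3 =>
      (β / (2 * Real.pi)) ^ ((3 : ℝ) / 2) * Real.exp (-(β / 2) * ‖x‖ ^ 2)
    exact continuous_const.mul
      (Real.continuous_exp.comp (continuous_const.mul (continuous_norm.pow 2)))
  have hT : Continuous fun p : E3 × sphere (0:E3) 1 => v + ⟪p.1, (p.2:E3)⟫ • (p.2:E3) :=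
    continuous_const.add (hInner.smul (continuous_subtype_val.comp continuous_snd))
  have hmeas : Measurable fun p : E3 × sphere (0:E3) 1 =>
      max ⟪p.1, (p.2 : E3)⟫ 0 * Maxwellian3 β (v + p.1)
        * Maxwellian3 β v ^ ((1:ℝ)/2)
        * Maxwellian3 β (v + ⟪p.1, (p.2 : E3)⟫ • (p.2 : E3)) ^ (-((1:ℝ)/2))
        * R (v + ⟪p.1, (p.2 : E3)⟫ • (p.2 : E3)) :=
    ((((hInner.max continuous_const).measurable.mul
      ((hMcont.comp (continuous_const.add continuous_fst)).measurable)).mul_const _).mul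
      ((hMcont.comp hT).rpow_const (fun x => Or.inl (hMpos _).ne')).measurable).mul
      (hRmeas.comp hT.measurable)
  refine Integrable.mono'
    (g := fun p : E3 × sphere (0:E3) 1 =>
      ((β/(2*π)) ^ ((3:ℝ)/2) * Maxwellian3 β v ^ ((1:ℝ)/2)
        * (β/(2*π)) ^ ((3:ℝ)/2 * -((1:ℝ)/2)) * C * Real.exp ((9/2)*β*‖v‖^2) * (1+16/β))
      * Real.exp (-(β/16) * ‖p.1‖^2)) ?_ hmeas.aestronglyMeasurable
    (Filter.Eventually.of_forall fun p => ?_)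
  · have hg0 : Integrable (fun w : E3 => Real.exp (-(β/16) * ‖w‖^2)) :=
      integrable_exp_neg_norm_sq (by positivity)
    have h2 := (hg0.mul_prod (integrable_const (1:ℝ)
      (μ := (volume : Measure E3).toSphere))).const_mul
      ((β/(2*π)) ^ ((3:ℝ)/2) * Maxwellian3 β v ^ ((1:ℝ)/2)
        * (β/(2*π)) ^ ((3:ℝ)/2 * -((1:ℝ)/2)) * C * Real.exp ((9/2)*β*‖v‖^2) * (1+16/β))
    refine h2.congr (Filter.Eventually.of_forall fun p => ?_)
    simp
  · have hω1 : ‖(p.2 : E3)‖ = 1 := by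
      have := p.2.2
      rwa [mem_sphere_zero_iff_norm] at this
    have hb := pointwise_bound hβ R hC v p.1 (p.2:E3) hω1
    calc ‖max ⟪p.1, (p.2 : E3)⟫ 0 * Maxwellian3 β (v + p.1)
        * Maxwellian3 β v ^ ((1:ℝ)/2)
        * Maxwellian3 β (v + ⟪p.1, (p.2 : E3)⟫ • (p.2 : E3)) ^ (-((1:ℝ)/2))
        * R (v + ⟪p.1, (p.2 : E3)⟫ • (p.2 : E3))‖
        = |max ⟪p.1, (p.2 : E3)⟫ 0 * Maxwellian3 β (v + p.1)
        * Maxwellian3 β v ^ ((1:ℝ)/2)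
        * Maxwellian3 β (v + ⟪p.1, (p.2 : E3)⟫ • (p.2 : E3)) ^ (-((1:ℝ)/2))
        * R (v + ⟪p.1, (p.2 : E3)⟫ • (p.2 : E3))| := Real.norm_eq_abs _
      _ ≤ _ := hb

end GainOpAux

open GainOpAux Metric Set

/-- **Integral-kernel representation of the gain operator** (Lemma B.1, first part):
`K̂R(v) = √(β/2π) ∫ R(η)/|η−v| · exp(−β[|η−v|²/8 + (|η|²−|v|²)²/(8|η−v|²)]) dη`. -/
theorem gainOp_kernel_representation (β : ℝ) (hβ : 0 < β)
    (R : EuclideanSpace ℝ (Fin 3) → ℝ) (hRmeas : Measurable R)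
    (hRbdd : ∃ C : ℝ, ∀ v, |R v| ≤ C) (v : EuclideanSpace ℝ (Fin 3)) :
    gainOp β R v
      = Real.sqrt (β / (2 * Real.pi)) *
          ∫ η : EuclideanSpace ℝ (Fin 3),
            R η / ‖η - v‖ *
              Real.exp (-β * (‖η - v‖ ^ 2 / 8
                + (‖η‖ ^ 2 - ‖v‖ ^ 2) ^ 2 / (8 * ‖η - v‖ ^ 2))) := by
  obtain ⟨C, hC⟩ := hRbdd
  have t1 : gainOp β R v
      = ∫ w : EuclideanSpace ℝ (Fin 3), ∫ ω : sphere (0 : EuclideanSpace ℝ (Fin 3)) 1,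
          max ⟪w, (ω : EuclideanSpace ℝ (Fin 3))⟫ 0 * Maxwellian3 β (v + w)
            * Maxwellian3 β v ^ ((1:ℝ)/2)
            * Maxwellian3 β (v + ⟪w, (ω : EuclideanSpace ℝ (Fin 3))⟫ •
                (ω : EuclideanSpace ℝ (Fin 3))) ^ (-((1:ℝ)/2))
            * R (v + ⟪w, (ω : EuclideanSpace ℝ (Fin 3))⟫ • (ω : EuclideanSpace ℝ (Fin 3)))
          ∂((volume : Measure (EuclideanSpace ℝ (Fin 3))).toSphere) := by
    rw [gainOp]
    rw [← MeasureTheory.integral_add_left_eq_self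
      (fun vc : EuclideanSpace ℝ (Fin 3) =>
        ∫ ω : sphere (0 : EuclideanSpace ℝ (Fin 3)) 1,
          max ⟪vc - v, (ω : EuclideanSpace ℝ (Fin 3))⟫ 0 * Maxwellian3 β vc
            * (Maxwellian3 β v) ^ ((1 : ℝ) / 2)
            * (Maxwellian3 β (v - ⟪v - vc, (ω : EuclideanSpace ℝ (Fin 3))⟫ •
                (ω : EuclideanSpace ℝ (Fin 3)))) ^ (-((1 : ℝ) / 2))
            * R (v - ⟪v - vc, (ω : EuclideanSpace ℝ (Fin 3))⟫ •
                (ω : EuclideanSpace ℝ (Fin 3)))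
          ∂((volume : Measure (EuclideanSpace ℝ (Fin 3))).toSphere)) v]
    refine MeasureTheory.integral_congr_ae (Filter.Eventually.of_forall fun w => ?_)
    refine MeasureTheory.integral_congr_ae (Filter.Eventually.of_forall fun ω => ?_)
    simp only [add_sub_cancel_left, sub_add_cancel_left, inner_neg_left, neg_smul,
      sub_neg_eq_add]
  rw [t1, MeasureTheory.integral_integral_swap (integrable_fubini_side hβ R hRmeas hC v)]
  have t2 : (∫ ω : sphere (0 : EuclideanSpace ℝ (Fin 3)) 1, ∫ w : EuclideanSpace ℝ (Fin 3),
        max ⟪w, (ω : EuclideanSpace ℝ (Fin 3))⟫ 0 * Maxwellian3 β (v + w)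
          * Maxwellian3 β v ^ ((1:ℝ)/2)
          * Maxwellian3 β (v + ⟪w, (ω : EuclideanSpace ℝ (Fin 3))⟫ •
              (ω : EuclideanSpace ℝ (Fin 3))) ^ (-((1:ℝ)/2))
          * R (v + ⟪w, (ω : EuclideanSpace ℝ (Fin 3))⟫ • (ω : EuclideanSpace ℝ (Fin 3)))
        ∂volume ∂((volume : Measure (EuclideanSpace ℝ (Fin 3))).toSphere))
      = ∫ ω : sphere (0 : EuclideanSpace ℝ (Fin 3)) 1,
          (Real.sqrt (β/(2*Real.pi)) * ∫ r in Ioi (0:ℝ),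
            r^2 * (R (v + r • (ω : EuclideanSpace ℝ (Fin 3)))
              / ‖r • (ω : EuclideanSpace ℝ (Fin 3))‖
              * Real.exp (-β * (‖r • (ω : EuclideanSpace ℝ (Fin 3))‖^2/8
                + (‖v + r • (ω : EuclideanSpace ℝ (Fin 3))‖^2 - ‖v‖^2)^2
                  /(8*‖r • (ω : EuclideanSpace ℝ (Fin 3))‖^2)))) ∂volume)
          ∂((volume : Measure (EuclideanSpace ℝ (Fin 3))).toSphere) := by
    refine MeasureTheory.integral_congr_ae (Filter.Eventually.of_forall fun ω => ?_)
    refine perOmega hβ R v (ω : EuclideanSpace ℝ (Fin 3)) ?_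
    have := ω.2
    rwa [mem_sphere_zero_iff_norm] at this
  rw [t2, MeasureTheory.integral_const_mul]
  have hpolar := polar3
    (fun u : EuclideanSpace ℝ (Fin 3) => R (v + u) / ‖u‖
      * Real.exp (-β * (‖u‖^2/8 + (‖v + u‖^2 - ‖v‖^2)^2/(8*‖u‖^2))))
    (integrable_polar_side hβ R hRmeas hC v)
  beta_reduce at hpolar
  rw [← hpolar]
  congr 1
  rw [← MeasureTheory.integral_add_left_eq_self
    (fun η : EuclideanSpace ℝ (Fin 3) => R η / ‖η - v‖ *
      Real.exp (-β * (‖η - v‖ ^ 2 / 8 + (‖η‖ ^ 2 - ‖v‖ ^ 2) ^ 2 / (8 * ‖η - v‖ ^ 2)))) v]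
  refine MeasureTheory.integral_congr_ae (Filter.Eventually.of_forall fun u => ?_)
  simp only [add_sub_cancel_left]
end

section
/- Let β > 0. There exists a constant C (depending only on β) such that for every bounded measurable R : ℝ³ → ℝ and every v ∈ ℝ³, |K̂R(v)| ≤ C · sup_{η ∈ ℝ³} |R(η)|, where K̂R(v) := ∫_{ℝ³} ∫_{𝕊²} ⟨v_c − v, ω⟩_+ M_β(v_c) M_β(v)^{1/2} M_β(v')^{−1/2} R(v') dω dv_c with v' := v − ⟨v − v_c, ω⟩ω. In other words, the gain operator K̂ is a bounded linear operator from L^∞(ℝ³) to itself. -/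
open scoped RealInnerProductSpace
open MeasureTheory

private lemma mul_exp_neg_sq_le {c t : ℝ} (hc : 0 < c) (ht : 0 ≤ t) :
    t * Real.exp (-(c * t ^ 2)) ≤ 1 / (2 * Real.sqrt c) := by
  have hsc : 0 < Real.sqrt c := Real.sqrt_pos.2 hc
  have hsq : Real.sqrt c ^ 2 = c := Real.sq_sqrt hc.le
  have key : 2 * Real.sqrt c * t ≤ Real.exp (c * t ^ 2) := by
    have h1 : c * t ^ 2 + 1 ≤ Real.exp (c * t ^ 2) := Real.add_one_le_exp _
    nlinarith [sq_nonneg (Real.sqrt c * t - 1)]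
  rw [Real.exp_neg, ← div_eq_mul_inv, div_le_div_iff₀ (Real.exp_pos _) (by positivity)]
  nlinarith [key]

private lemma maxwellian3_pos {β : ℝ} (hβ : 0 < β) (v : EuclideanSpace ℝ (Fin 3)) :
    0 < Maxwellian3 β v := by
  have : 0 < β / (2 * Real.pi) := div_pos hβ (by positivity)
  exact mul_pos (Real.rpow_pos_of_pos this _) (Real.exp_pos _)

private lemma kernel_nonneg {β : ℝ} (hβ : 0 < β) (v vc ω : EuclideanSpace ℝ (Fin 3)) :
    0 ≤ max ⟪vc - v, ω⟫ 0 * Maxwellian3 β vc * (Maxwellian3 β v) ^ ((1 : ℝ) / 2)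
      * (Maxwellian3 β (v - ⟪v - vc, ω⟫ • ω)) ^ (-((1 : ℝ) / 2)) := by
  have h1 := maxwellian3_pos hβ vc
  have h2 := maxwellian3_pos hβ v
  have h3 := maxwellian3_pos hβ (v - ⟪v - vc, ω⟫ • ω)
  have := le_max_right ⟪vc - v, ω⟫ (0 : ℝ)
  positivity

set_option maxHeartbeats 1000000 in
private lemma kernel_bound {β : ℝ} (hβ : 0 < β) (v vc ω : EuclideanSpace ℝ (Fin 3))
    (hω : ‖ω‖ = 1) :
    max ⟪vc - v, ω⟫ 0 * Maxwellian3 β vc * (Maxwellian3 β v) ^ ((1 : ℝ) / 2)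
      * (Maxwellian3 β (v - ⟪v - vc, ω⟫ • ω)) ^ (-((1 : ℝ) / 2))
    ≤ (β / (2 * Real.pi)) ^ ((3 : ℝ) / 2) / Real.sqrt (β / 8)
        * Real.exp (-(β / 8 * ‖vc‖ ^ 2)) := by
  set c : ℝ := (β / (2 * Real.pi)) ^ ((3 : ℝ) / 2) with hcdef
  have hc : 0 < c := Real.rpow_pos_of_pos (div_pos hβ (by positivity)) _
  set a : ℝ := ⟪vc - v, ω⟫ with hadef
  set t : ℝ := ⟪v - vc, ω⟫ with htdef
  set w : EuclideanSpace ℝ (Fin 3) := vc - a • ω with hwdef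
  have ha : a = ⟪vc, ω⟫ - ⟪v, ω⟫ := by rw [hadef, inner_sub_left]
  have ht : t = ⟪v, ω⟫ - ⟪vc, ω⟫ := by rw [htdef, inner_sub_left]
  have hωsq : ‖ω‖ ^ 2 = 1 := by rw [hω]; norm_num
  have hv' : ‖v - t • ω‖ ^ 2 = ‖v‖ ^ 2 - 2 * (t * ⟪v, ω⟫) + t ^ 2 := by
    rw [norm_sub_sq_real, real_inner_smul_right, norm_smul]
    simp [hω, mul_pow, sq_abs]
  have hwn : ‖w‖ ^ 2 = ‖vc‖ ^ 2 - 2 * (a * ⟪vc, ω⟫) + a ^ 2 := by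
    rw [hwdef, norm_sub_sq_real, real_inner_smul_right, norm_smul]
    simp [hω, mul_pow, sq_abs]
  -- the key identity
  have key : Maxwellian3 β vc * (Maxwellian3 β v) ^ ((1 : ℝ) / 2)
      * (Maxwellian3 β (v - t • ω)) ^ (-((1 : ℝ) / 2))
      = c * (Real.exp (-(β / 4 * ‖vc‖ ^ 2)) * Real.exp (-(β / 4 * ‖w‖ ^ 2))) := by
    have hlog : c = Real.exp (Real.log c) := (Real.exp_log hc).symm
    have hM : ∀ x : EuclideanSpace ℝ (Fin 3),
        Maxwellian3 β x = Real.exp (Real.log c + -(β / 2) * ‖x‖ ^ 2) := by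
      intro x
      rw [Maxwellian3, Real.exp_add, ← hcdef, ← hlog]
    rw [hM, hM, hM, ← Real.exp_mul, ← Real.exp_mul]
    conv_rhs => rw [hlog]
    rw [← Real.exp_add, ← Real.exp_add, ← Real.exp_add, ← Real.exp_add]
    congr 1
    rw [hv', hwn, ha, ht]
    ring
  calc max a 0 * Maxwellian3 β vc * (Maxwellian3 β v) ^ ((1 : ℝ) / 2)
      * (Maxwellian3 β (v - t • ω)) ^ (-((1 : ℝ) / 2))
      = max a 0 * (Maxwellian3 β vc * (Maxwellian3 β v) ^ ((1 : ℝ) / 2)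
        * (Maxwellian3 β (v - t • ω)) ^ (-((1 : ℝ) / 2))) := by ring
    _ = max a 0 * (c * (Real.exp (-(β / 4 * ‖vc‖ ^ 2)) * Real.exp (-(β / 4 * ‖w‖ ^ 2)))) := by
        rw [key]
    _ ≤ c / Real.sqrt (β / 8) * Real.exp (-(β / 8 * ‖vc‖ ^ 2)) := ?_
  -- now the quantitative bound
  set b : ℝ := β / 8 with hbdef
  have hb : 0 < b := by positivity
  have hsb : 0 < Real.sqrt b := Real.sqrt_pos.2 hb
  set u : ℝ := Real.exp (-(b * ‖vc‖ ^ 2)) with hudef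
  set y : ℝ := Real.exp (-(b * ‖w‖ ^ 2)) with hydef
  have hu1 : u ≤ 1 := Real.exp_le_one_iff.2 (by nlinarith [sq_nonneg ‖vc‖])
  have hy1 : y ≤ 1 := Real.exp_le_one_iff.2 (by nlinarith [sq_nonneg ‖w‖])
  have hu0 : 0 < u := Real.exp_pos _
  have hy0 : 0 < y := Real.exp_pos _
  have he1 : Real.exp (-(β / 4 * ‖vc‖ ^ 2)) = u * u := by
    rw [hudef, ← Real.exp_add]; congr 1; rw [hbdef]; ring
  have he2 : Real.exp (-(β / 4 * ‖w‖ ^ 2)) = y * y := by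
    rw [hydef, ← Real.exp_add]; congr 1; rw [hbdef]; ring
  set K : ℝ := 1 / (2 * Real.sqrt b) with hKdef
  have hK0 : 0 < K := by positivity
  have P1 : ‖vc‖ * u ≤ K := mul_exp_neg_sq_le hb (norm_nonneg _)
  have P2 : ‖w‖ * y ≤ K := mul_exp_neg_sq_le hb (norm_nonneg _)
  have hmax : max a 0 ≤ ‖vc‖ + ‖w‖ := by
    have hwin : ⟪w, ω⟫ = ⟪vc, ω⟫ - a := by
      rw [hwdef, inner_sub_left, real_inner_smul_left, real_inner_self_eq_norm_sq, hωsq]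
      ring
    have h1 : |⟪vc, ω⟫| ≤ ‖vc‖ := by
      have := abs_real_inner_le_norm vc ω; rwa [hω, mul_one] at this
    have h2 : |⟪w, ω⟫| ≤ ‖w‖ := by
      have := abs_real_inner_le_norm w ω; rwa [hω, mul_one] at this
    have haw : a = ⟪vc, ω⟫ - ⟪w, ω⟫ := by rw [hwin]; ring
    refine max_le ?_ (by positivity)
    calc a ≤ |a| := le_abs_self _
      _ = |⟪vc, ω⟫ - ⟪w, ω⟫| := by rw [haw]
      _ ≤ |⟪vc, ω⟫| + |⟪w, ω⟫| := abs_sub _ _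
      _ ≤ ‖vc‖ + ‖w‖ := add_le_add h1 h2
  rw [he1, he2]
  have hmain : max a 0 * (u * u * (y * y)) ≤ 2 * K * u := by
    have step : max a 0 * (u * u * (y * y)) ≤ (‖vc‖ + ‖w‖) * (u * u * (y * y)) :=
      mul_le_mul_of_nonneg_right hmax (by positivity)
    refine step.trans ?_
    have hyy : y * y ≤ 1 := by nlinarith
    have e1 : u * (y * y) ≤ u := by
      simpa using mul_le_mul_of_nonneg_left hyy hu0.le
    have e2 : u * u * y ≤ u := by
      have h1 : u * u * y ≤ u * u := by
        simpa using mul_le_mul_of_nonneg_left hy1 (by positivity : (0:ℝ) ≤ u * u)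
      nlinarith
    have t1 : ‖vc‖ * u * (u * (y * y)) ≤ K * u :=
      mul_le_mul P1 e1 (by positivity) hK0.le
    have t2 : ‖w‖ * y * (u * u * y) ≤ K * u :=
      mul_le_mul P2 e2 (by positivity) hK0.le
    have hsplit : (‖vc‖ + ‖w‖) * (u * u * (y * y))
        = ‖vc‖ * u * (u * (y * y)) + ‖w‖ * y * (u * u * y) := by ring
    rw [hsplit]; linarith
  have h2K : c / Real.sqrt b = c * (2 * K) := by
    rw [hKdef]; field_simp
  calc max a 0 * (c * (u * u * (y * y))) = c * (max a 0 * (u * u * (y * y))) := by ring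
    _ ≤ c * (2 * K * u) := mul_le_mul_of_nonneg_left hmain hc.le
    _ = c / Real.sqrt b * u := by rw [h2K]; ring

private lemma integrable_gauss3 {b : ℝ} (hb : 0 < b) :
    Integrable (fun v : EuclideanSpace ℝ (Fin 3) => Real.exp (-(b * ‖v‖ ^ 2))) := by
  have h := (GaussianFourier.integrable_cexp_neg_mul_sq_norm_add
    (V := EuclideanSpace ℝ (Fin 3)) (b := (b : ℂ)) (by simpa using hb) 0 0).norm
  refine h.congr (Filter.Eventually.of_forall fun v => ?_)
  simp [Complex.norm_exp, ← Complex.ofReal_pow, neg_mul]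

/-- **Boundedness of the gain operator on `L^∞`** (Lemma B.1):
there is a constant `C` depending only on `β` such that
`|K̂R(v)| ≤ C · sup |R|` for every bounded measurable `R` and every `v`. -/
theorem gainOp_bounded (β : ℝ) (hβ : 0 < β) :
    ∃ C : ℝ, ∀ R : EuclideanSpace ℝ (Fin 3) → ℝ, Measurable R →
      ∀ M : ℝ, (∀ η, |R η| ≤ M) →
        ∀ v : EuclideanSpace ℝ (Fin 3), |gainOp β R v| ≤ C * M := by
  set E := EuclideanSpace ℝ (Fin 3)
  set b : ℝ := β / 8 with hbdef
  have hb : 0 < b := by positivity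
  set D : ℝ := (β / (2 * Real.pi)) ^ ((3 : ℝ) / 2) / Real.sqrt b with hDdef
  have hD : 0 < D :=
    div_pos (Real.rpow_pos_of_pos (div_pos hβ (by positivity)) _) (Real.sqrt_pos.2 hb)
  set S : ℝ := (((volume : Measure E).toSphere) Set.univ).toReal with hSdef
  have hS : 0 ≤ S := ENNReal.toReal_nonneg
  set I : ℝ := ∫ vc : E, Real.exp (-(b * ‖vc‖ ^ 2)) with hIdef
  refine ⟨S * D * I, fun R hR M hM v => ?_⟩
  have hM0 : 0 ≤ M := (abs_nonneg _).trans (hM 0)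
  have hgauss := integrable_gauss3 (b := b) hb
  -- pointwise bound for the inner integral
  have inner_bound : ∀ vc : E,
      ‖∫ ω : Metric.sphere (0 : E) 1,
        max ⟪vc - v, (ω : E)⟫ 0 * Maxwellian3 β vc
          * (Maxwellian3 β v) ^ ((1 : ℝ) / 2)
          * (Maxwellian3 β (v - ⟪v - vc, (ω : E)⟫ • (ω : E))) ^ (-((1 : ℝ) / 2))
          * R (v - ⟪v - vc, (ω : E)⟫ • (ω : E))
        ∂((volume : Measure E).toSphere)‖
      ≤ S * (D * Real.exp (-(b * ‖vc‖ ^ 2)) * M) := by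
    intro vc
    refine (norm_integral_le_integral_norm _).trans ?_
    have hconst : (∫ _ : Metric.sphere (0 : E) 1,
        D * Real.exp (-(b * ‖vc‖ ^ 2)) * M ∂((volume : Measure E).toSphere))
        = S * (D * Real.exp (-(b * ‖vc‖ ^ 2)) * M) := by
      rw [integral_const, smul_eq_mul]; rfl
    rw [← hconst]
    refine integral_mono_of_nonneg (Filter.Eventually.of_forall fun ω => norm_nonneg _)
      (integrable_const _) (Filter.Eventually.of_forall fun ω => ?_)
    have hω : ‖(ω : E)‖ = 1 := by
      have := ω.2
      rwa [mem_sphere_zero_iff_norm] at this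
    simp only [Real.norm_eq_abs]
    rw [abs_mul]
    have hker := kernel_bound hβ v vc (ω : E) hω
    have hnn := kernel_nonneg hβ v vc (ω : E)
    calc |max ⟪vc - v, (ω : E)⟫ 0 * Maxwellian3 β vc
          * (Maxwellian3 β v) ^ ((1 : ℝ) / 2)
          * (Maxwellian3 β (v - ⟪v - vc, (ω : E)⟫ • (ω : E))) ^ (-((1 : ℝ) / 2))|
          * |R (v - ⟪v - vc, (ω : E)⟫ • (ω : E))|
        ≤ (β / (2 * Real.pi)) ^ ((3 : ℝ) / 2) / Real.sqrt (β / 8)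
            * Real.exp (-(β / 8 * ‖vc‖ ^ 2)) * M := by
          refine mul_le_mul ?_ (hM _) (abs_nonneg _) ?_
          · rwa [abs_of_nonneg hnn]
          · positivity
      _ = D * Real.exp (-(b * ‖vc‖ ^ 2)) * M := by rw [hDdef, hbdef]
  -- outer integral
  rw [gainOp, ← Real.norm_eq_abs]
  refine (norm_integral_le_integral_norm _).trans ?_
  have houter : (∫ vc : E, S * D * M * Real.exp (-(b * ‖vc‖ ^ 2))) = S * D * I * M := by
    rw [integral_const_mul, hIdef]; ring
  rw [← houter]
  refine integral_mono_of_nonneg (Filter.Eventually.of_forall fun vc => norm_nonneg _)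
    (hgauss.const_mul _) (Filter.Eventually.of_forall fun vc => ?_)
  calc ‖∫ ω : Metric.sphere (0 : E) 1,
        max ⟪vc - v, (ω : E)⟫ 0 * Maxwellian3 β vc
          * (Maxwellian3 β v) ^ ((1 : ℝ) / 2)
          * (Maxwellian3 β (v - ⟪v - vc, (ω : E)⟫ • (ω : E))) ^ (-((1 : ℝ) / 2))
          * R (v - ⟪v - vc, (ω : E)⟫ • (ω : E))
        ∂((volume : Measure E).toSphere)‖
      ≤ S * (D * Real.exp (-(b * ‖vc‖ ^ 2)) * M) := inner_bound vc
    _ = S * D * M * Real.exp (-(b * ‖vc‖ ^ 2)) := by ring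
end

section
/- For every β > 0 and every b ≥ 0, ∫_0^∞ r · exp( −(β/8) ( r² + (r − 2b)² ) ) dr ≤ (2/β) exp(−β b²/2) + (16/β) exp(−β b²/8). -/
open MeasureTheory Real Set Filter

lemma aux_integral (c : ℝ) (hc : 0 < c) :
    ∫ r in Set.Ioi (0 : ℝ), r * Real.exp (-c * r ^ 2) = (2 * c)⁻¹ := by
  have hc' : c ≠ 0 := ne_of_gt hc
  have A : ∀ x : ℝ, HasDerivAt (fun x => -(2 * c)⁻¹ * Real.exp (-c * x ^ 2))
      (x * Real.exp (-c * x ^ 2)) x := by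
    intro x
    convert ((hasDerivAt_pow 2 x).const_mul (-c)).exp.const_mul (-(2 * c)⁻¹) using 1
    · rfl
    · rfl
    field_simp
    ring
  have B : Tendsto (fun y : ℝ ↦ -(2 * c)⁻¹ * Real.exp (-c * (y : ℝ) ^ 2))
      atTop (nhds (-(2 * c)⁻¹ * 0)) := by
    refine Tendsto.const_mul _ ?_
    exact Real.tendsto_exp_atBot.comp
      ((tendsto_pow_atTop two_ne_zero).const_mul_atTop_of_neg (neg_lt_zero.2 hc))
  have := integral_Ioi_of_hasDerivAt_of_tendsto' (a := 0) (f := fun x => -(2 * c)⁻¹ * Real.exp (-c * x ^ 2))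
    (fun x _ => A x) (integrable_mul_exp_neg_mul_sq hc).integrableOn B
  rw [this]
  simp

/-- **Radial Gaussian estimate** (proof of Lemma B.1): for `β > 0` and `b ≥ 0`,
`∫_0^∞ r e^{−(β/8)(r² + (r−2b)²)} dr ≤ (2/β) e^{−βb²/2} + (16/β) e^{−βb²/8}`. -/
theorem radial_gaussian_estimate (β : ℝ) (hβ : 0 < β) (b : ℝ) (hb : 0 ≤ b) :
    ∫ r in Set.Ioi (0 : ℝ), r * Real.exp (-(β / 8) * (r ^ 2 + (r - 2 * b) ^ 2))
      ≤ 2 / β * Real.exp (-β * b ^ 2 / 2) + 16 / β * Real.exp (-β * b ^ 2 / 8) := by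
  have hc : 0 < β / 16 := by linarith
  -- pointwise bound
  have key : ∀ r ∈ Set.Ioi (0 : ℝ),
      r * Real.exp (-(β / 8) * (r ^ 2 + (r - 2 * b) ^ 2))
        ≤ Real.exp (-β * b ^ 2 / 8) * (r * Real.exp (-(β / 16) * r ^ 2)) := by
    intro r hr
    rw [← mul_assoc, mul_comm (Real.exp _) r, mul_assoc, ← Real.exp_add]
    refine mul_le_mul_of_nonneg_left (Real.exp_le_exp.2 ?_) (le_of_lt hr)
    nlinarith [sq_nonneg (3 * r - 4 * b), sq_nonneg r, sq_nonneg b]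
  have hInt2 : IntegrableOn (fun r : ℝ =>
      Real.exp (-β * b ^ 2 / 8) * (r * Real.exp (-(β / 16) * r ^ 2))) (Set.Ioi 0) :=
    ((integrable_mul_exp_neg_mul_sq hc).const_mul _).integrableOn
  have hInt1 : IntegrableOn (fun r : ℝ =>
      r * Real.exp (-(β / 8) * (r ^ 2 + (r - 2 * b) ^ 2))) (Set.Ioi 0) := by
    refine hInt2.mono' ?_ ?_
    · exact (Continuous.aestronglyMeasurable (by continuity)).restrict
    · filter_upwards [ae_restrict_mem measurableSet_Ioi] with r hr
      rw [Real.norm_eq_abs, abs_of_nonneg (mul_nonneg (le_of_lt hr) (Real.exp_pos _).le)]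
      exact key r hr
  have hmono := setIntegral_mono_on hInt1 hInt2 measurableSet_Ioi key
  have hval : ∫ r in Set.Ioi (0 : ℝ),
      Real.exp (-β * b ^ 2 / 8) * (r * Real.exp (-(β / 16) * r ^ 2))
      = Real.exp (-β * b ^ 2 / 8) * (8 / β) := by
    rw [integral_const_mul, aux_integral (β / 16) hc]
    ring_nf
  calc _ ≤ Real.exp (-β * b ^ 2 / 8) * (8 / β) := hval ▸ hmono
    _ ≤ 2 / β * Real.exp (-β * b ^ 2 / 2) + 16 / β * Real.exp (-β * b ^ 2 / 8) := by
        have h1 : (0:ℝ) ≤ 2 / β * Real.exp (-β * b ^ 2 / 2) := by positivity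
        have h2 : Real.exp (-β * b ^ 2 / 8) * (8 / β) ≤ 16 / β * Real.exp (-β * b ^ 2 / 8) := by
          rw [mul_comm]
          refine mul_le_mul_of_nonneg_right ?_ (Real.exp_pos _).le
          gcongr <;> norm_num
        linarith
end

section
/- Let d ≥ 3. There exists a finite constant C_d such that for every a ∈ ℝ^d, ∫_{ℝ^d} ∫_{ℝ^d} exp(−|v|² − |w|²) / sin∠(a − v, w − v) dw dv ≤ C_d, where ∠(x, y) ∈ [0, π] denotes the angle between two nonzero vectors x, y ∈ ℝ^d (the integrand being interpreted as +∞ on the null set where a − v or w − v vanishes or where the two vectors are parallel). -/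
open scoped ENNReal
open MeasureTheory

section Aux

open Real Set

lemma my_ofReal_prod {ι : Type*} (s : Finset ι) (f : ι → ℝ) (h : ∀ i ∈ s, 0 ≤ f i) :
    ENNReal.ofReal (∏ i ∈ s, f i) = ∏ i ∈ s, ENNReal.ofReal (f i) := by
  induction s using Finset.cons_induction with
  | empty => simp
  | cons a s ha ih =>
    rw [Finset.prod_cons, Finset.prod_cons, ENNReal.ofReal_mul (h a (Finset.mem_cons_self a s)),
      ih (fun i hi => h i (Finset.mem_cons_of_mem hi))]

lemma my_lintegral_pi_prod : ∀ {n : ℕ} (f : Fin n → ℝ → ℝ≥0∞), (∀ i, Measurable (f i)) →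
    ∫⁻ x : Fin n → ℝ, ∏ i, f i (x i) = ∏ i, ∫⁻ t : ℝ, f i t := by
  intro n
  induction n with
  | zero =>
    intro f _
    simp only [Finset.univ_eq_empty, Finset.prod_empty, lintegral_const, one_mul]
    rw [volume_pi]
    simp [Measure.pi_of_empty]
  | succ n ih =>
    intro f hf
    have h := ((measurePreserving_piFinSuccAbove (fun _ : Fin (n+1) => (volume : Measure ℝ)) 0).symm)
    rw [volume_pi, ← h.lintegral_comp_emb (MeasurableEquiv.measurableEmbedding _)]
    have key : ∀ a : ℝ × (Fin n → ℝ),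
        ∏ i : Fin (n+1), f i ((MeasurableEquiv.piFinSuccAbove (fun _ : Fin (n+1) => ℝ) 0).symm a i)
          = f 0 a.1 * ∏ j : Fin n, f j.succ (a.2 j) := by
      intro a
      rw [MeasurableEquiv.piFinSuccAbove_symm_apply, Fin.prod_univ_succ]
      simp [Fin.insertNthEquiv, Fin.insertNth_zero]
    simp_rw [key]
    rw [lintegral_prod_mul (f := fun t => f 0 t) (g := fun y : Fin n → ℝ => ∏ j, f j.succ (y j))
      (hf 0).aemeasurable
      (Measurable.aemeasurable (by
        exact Finset.measurable_prod Finset.univ (fun (j : Fin n) _ =>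
          (hf j.succ).comp (measurable_pi_apply j))))]
    rw [← volume_pi, ih (fun j => f j.succ) (fun j => hf j.succ), Fin.prod_univ_succ]

lemma my_gauss_1d {c : ℝ} (hc : 0 < c) : ∫⁻ t : ℝ, ENNReal.ofReal (exp (-(c * t ^ 2))) < ⊤ := by
  have hInt : Integrable (fun t : ℝ => exp (-c * t ^ 2)) := integrable_exp_neg_mul_sq hc
  have := (hasFiniteIntegral_iff_ofReal
    (ae_of_all _ (fun t => (exp_pos (-c * t ^ 2)).le))).1 hInt.2
  simpa [neg_mul] using this

lemma my_sqrt_inv_rpow {s : ℝ} (hs : 0 ≤ s) : (√s)⁻¹ = s ^ (-2⁻¹ : ℝ) := by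
  rw [Real.sqrt_eq_rpow, ← Real.rpow_neg hs]
  norm_num

lemma my_neg_rpow_zero {t : ℝ} (ht : t < 0) : t ^ (-2⁻¹ : ℝ) = 0 := by
  rw [Real.rpow_def_of_neg ht]
  have : (-2⁻¹ : ℝ) * π = -(π / 2) := by ring
  rw [this, Real.cos_neg, Real.cos_pi_div_two, mul_zero]

lemma my_sing_int : IntegrableOn (fun t : ℝ => (√|t|)⁻¹) (Ioo (-1 : ℝ) 1) := by
  have hmeas : Measurable (fun t : ℝ => (√|t|)⁻¹) :=
    (Real.continuous_sqrt.comp continuous_abs).measurable.inv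
  have I1 : IntervalIntegrable (fun x : ℝ => x ^ (-2⁻¹ : ℝ)) volume (-1) 1 :=
    intervalIntegral.intervalIntegrable_rpow' (by norm_num)
  have I2 : IntervalIntegrable (fun x : ℝ => (-x) ^ (-2⁻¹ : ℝ)) volume (-1) 1 := by
    have := ((IntervalIntegrable.iff_comp_neg (a := -1) (b := 1) (f := fun x : ℝ => x ^ (-2⁻¹ : ℝ))).1 I1)
    simpa using this.symm
  have I3 : IntegrableOn (fun x : ℝ => x ^ (-2⁻¹ : ℝ) + (-x) ^ (-2⁻¹ : ℝ)) (Ioc (-1 : ℝ) 1) := by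
    have := I1.add I2
    rwa [intervalIntegrable_iff, uIoc_of_le (by norm_num : (-1:ℝ) ≤ 1)] at this
  refine (Integrable.mono' (I3.mono_set Ioo_subset_Ioc_self) hmeas.aestronglyMeasurable ?_)
  refine ae_of_all _ (fun t => ?_)
  rw [Real.norm_eq_abs, abs_of_nonneg (inv_nonneg.2 (Real.sqrt_nonneg _))]
  rcases lt_trichotomy t 0 with ht | rfl | ht
  · rw [abs_of_neg ht, my_sqrt_inv_rpow (by linarith), my_neg_rpow_zero ht, zero_add]
  · simp [Real.zero_rpow (by norm_num : (-2⁻¹:ℝ) ≠ 0)]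
  · rw [abs_of_pos ht, my_sqrt_inv_rpow ht.le, my_neg_rpow_zero (by linarith : -t < 0), add_zero]

lemma my_sing_1d :
    ∫⁻ t : ℝ, ENNReal.ofReal (exp (-(8⁻¹ * t ^ 2))) * (ENNReal.ofReal (√|t|))⁻¹ < ⊤ := by
  set g : ℝ → ℝ≥0∞ := fun t => ENNReal.ofReal (exp (-(8⁻¹ * t ^ 2)))
    + (Ioo (-1 : ℝ) 1).indicator (fun t => ENNReal.ofReal ((√|t|)⁻¹)) t with hg
  have hbound : ∀ᵐ t : ℝ,
      ENNReal.ofReal (exp (-(8⁻¹ * t ^ 2))) * (ENNReal.ofReal (√|t|))⁻¹ ≤ g t := by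
    have h0 : ∀ᵐ t : ℝ, t ≠ 0 := by
      refine (ae_iff).2 ?_
      simp
    filter_upwards [h0] with t ht
    rcases le_or_gt 1 |t| with h1 | h1
    · have : (ENNReal.ofReal (√|t|))⁻¹ ≤ 1 := by
        rw [ENNReal.inv_le_one]
        exact le_trans (by norm_num) (ENNReal.ofReal_le_ofReal (Real.one_le_sqrt.2 h1))
      calc ENNReal.ofReal (exp (-(8⁻¹ * t ^ 2))) * (ENNReal.ofReal (√|t|))⁻¹
          ≤ ENNReal.ofReal (exp (-(8⁻¹ * t ^ 2))) * 1 := by gcongr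
        _ = ENNReal.ofReal (exp (-(8⁻¹ * t ^ 2))) := mul_one _
        _ ≤ g t := le_self_add
    · have htpos : 0 < |t| := abs_pos.2 ht
      have hnum : ENNReal.ofReal (exp (-(8⁻¹ * t ^ 2))) ≤ 1 := by
        rw [← ENNReal.ofReal_one]
        exact ENNReal.ofReal_le_ofReal (by
          rw [← Real.exp_zero]
          exact Real.exp_le_exp.2 (by nlinarith [sq_nonneg t]))
      have hmem : t ∈ Ioo (-1 : ℝ) 1 := by
        rcases abs_lt.1 h1 with ⟨h2, h3⟩; exact ⟨h2, h3⟩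
      calc ENNReal.ofReal (exp (-(8⁻¹ * t ^ 2))) * (ENNReal.ofReal (√|t|))⁻¹
          ≤ 1 * (ENNReal.ofReal (√|t|))⁻¹ := by gcongr
        _ = (ENNReal.ofReal (√|t|))⁻¹ := one_mul _
        _ = ENNReal.ofReal ((√|t|)⁻¹) := (ENNReal.ofReal_inv_of_pos (Real.sqrt_pos.2 htpos)).symm
        _ = (Ioo (-1 : ℝ) 1).indicator (fun t => ENNReal.ofReal ((√|t|)⁻¹)) t := by
            rw [Set.indicator_of_mem hmem]
        _ ≤ g t := le_add_self
  refine lt_of_le_of_lt (lintegral_mono_ae hbound) ?_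
  rw [hg, lintegral_add_left (by fun_prop)]
  have h2 : ∫⁻ t : ℝ, (Ioo (-1 : ℝ) 1).indicator (fun t => ENNReal.ofReal ((√|t|)⁻¹)) t < ⊤ := by
    rw [lintegral_indicator measurableSet_Ioo]
    exact (hasFiniteIntegral_iff_ofReal
      (ae_of_all _ (fun t => inv_nonneg.2 (Real.sqrt_nonneg _)))).1 my_sing_int.2
  exact ENNReal.add_lt_top.2 ⟨my_gauss_1d (by norm_num : (0:ℝ) < 8⁻¹), h2⟩

end Aux

section Core

open Real InnerProductGeometry
open scoped RealInnerProductSpace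

variable {d : ℕ}

local notation "E" => EuclideanSpace ℝ (Fin d)

lemma my_norm_sq_eq (x : E) : ‖x‖ ^ 2 = ∑ i, x i ^ 2 := by
  rw [EuclideanSpace.norm_eq, Real.sq_sqrt (Finset.sum_nonneg fun i _ => sq_nonneg _)]
  simp [sq_abs]

lemma my_sin_angle_single (hd : 0 < d) (x : E) (hx : x ≠ 0) :
    Real.sin (angle (EuclideanSpace.single (⟨0, hd⟩ : Fin d) (1:ℝ)) x)
      = √(‖x‖ ^ 2 - x ⟨0, hd⟩ ^ 2) / ‖x‖ := by
  set e1 : E := EuclideanSpace.single (⟨0, hd⟩ : Fin d) (1:ℝ) with he1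
  have h := sin_angle_mul_norm_mul_norm e1 x
  have he1n : ‖e1‖ = 1 := by rw [he1, EuclideanSpace.norm_single, norm_one]
  have h1 : (inner ℝ e1 e1 : ℝ) = 1 := by
    rw [real_inner_self_eq_norm_sq, he1n]; norm_num
  have h2 : (inner ℝ e1 x : ℝ) = x ⟨0, hd⟩ := by
    rw [he1, EuclideanSpace.inner_single_left]; simp
  have h3 : (inner ℝ x x : ℝ) = ‖x‖ ^ 2 := real_inner_self_eq_norm_sq x
  rw [he1n, h1, h3, h2, one_mul, one_mul] at h
  rw [eq_div_iff (norm_ne_zero_iff.2 hx), h]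
  ring_nf

lemma my_K_lt_top (hd : 3 ≤ d) :
    ∫⁻ x : E, ENNReal.ofReal (exp (-(4⁻¹ * ‖x‖ ^ 2)))
      / ENNReal.ofReal (Real.sin (angle (EuclideanSpace.single (⟨0, by omega⟩ : Fin d) (1:ℝ)) x))
      < ⊤ := by
  have hd0 : 0 < d := by omega
  set i0 : Fin d := ⟨0, by omega⟩
  set i1 : Fin d := ⟨1, by omega⟩
  set i2 : Fin d := ⟨2, by omega⟩
  have h01 : i0 ≠ i1 := by simp [i0, i1, Fin.ext_iff]
  have h02 : i0 ≠ i2 := by simp [i0, i2, Fin.ext_iff]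
  have h12 : i1 ≠ i2 := by simp [i1, i2, Fin.ext_iff]
  set g : Fin d → ℝ → ℝ≥0∞ := fun i t =>
    ENNReal.ofReal ((if i = i0 then 2 else 1) * exp (-(8⁻¹ * t ^ 2)))
      * ((ENNReal.ofReal (√|t|))⁻¹) ^ (if i = i1 then 1 else 0)
      * ((ENNReal.ofReal (√|t|))⁻¹) ^ (if i = i2 then 1 else 0) with hgdef
  have hgmeas : ∀ i, Measurable (g i) := by
    intro i
    apply Measurable.mul
    apply Measurable.mul
    · fun_prop
    · exact ((measurable_coe_nnreal_ennreal.comp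
        (measurable_real_toNNReal.comp
          (Real.continuous_sqrt.comp continuous_abs).measurable)).inv).pow_const _
    · exact ((measurable_coe_nnreal_ennreal.comp
        (measurable_real_toNNReal.comp
          (Real.continuous_sqrt.comp continuous_abs).measurable)).inv).pow_const _
  -- the product of g i (x i)
  have hprod : ∀ x : E, ∏ i, g i (x i)
      = ENNReal.ofReal (2 * exp (-(8⁻¹ * ‖x‖ ^ 2)))
          / ENNReal.ofReal (√|x i1| * √|x i2|) := by
    intro x
    rw [hgdef]
    rw [Finset.prod_mul_distrib, Finset.prod_mul_distrib]
    have hP1 : ∏ i, ENNReal.ofReal ((if i = i0 then 2 else 1) * exp (-(8⁻¹ * (x i) ^ 2)))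
        = ENNReal.ofReal (2 * exp (-(8⁻¹ * ‖x‖ ^ 2))) := by
      rw [← my_ofReal_prod _ _ (fun i _ => by positivity)]
      congr 1
      rw [Finset.prod_mul_distrib, Finset.prod_ite_eq' Finset.univ i0 (fun _ => (2:ℝ))]
      simp only [Finset.mem_univ, if_true]
      rw [← Real.exp_sum]
      congr 1
      rw [my_norm_sq_eq, Finset.mul_sum]
      simp
    have hP2 : ∏ i, ((ENNReal.ofReal (√|x i|))⁻¹) ^ (if i = i1 then 1 else 0)
        = (ENNReal.ofReal (√|x i1|))⁻¹ := by
      have : ∀ i : Fin d, ((ENNReal.ofReal (√|x i|))⁻¹) ^ (if i = i1 then 1 else 0)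
          = if i = i1 then (ENNReal.ofReal (√|x i|))⁻¹ else 1 := by
        intro i; split <;> simp
      simp_rw [this]
      rw [Finset.prod_ite_eq' Finset.univ i1 (fun i => (ENNReal.ofReal (√|x i|))⁻¹)]
      simp
    have hP3 : ∏ i, ((ENNReal.ofReal (√|x i|))⁻¹) ^ (if i = i2 then 1 else 0)
        = (ENNReal.ofReal (√|x i2|))⁻¹ := by
      have : ∀ i : Fin d, ((ENNReal.ofReal (√|x i|))⁻¹) ^ (if i = i2 then 1 else 0)
          = if i = i2 then (ENNReal.ofReal (√|x i|))⁻¹ else 1 := by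
        intro i; split <;> simp
      simp_rw [this]
      rw [Finset.prod_ite_eq' Finset.univ i2 (fun i => (ENNReal.ofReal (√|x i|))⁻¹)]
      simp
    rw [hP1, hP2, hP3, mul_assoc,
      ← ENNReal.mul_inv (Or.inr ENNReal.ofReal_ne_top) (Or.inl ENNReal.ofReal_ne_top),
      ← ENNReal.ofReal_mul (Real.sqrt_nonneg _), ← div_eq_mul_inv]
  -- pointwise bound
  have hpoint : ∀ x : E,
      ENNReal.ofReal (exp (-(4⁻¹ * ‖x‖ ^ 2)))
        / ENNReal.ofReal (Real.sin (angle (EuclideanSpace.single i0 (1:ℝ)) x))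
      ≤ ∏ i, g i (x i) := by
    intro x
    rw [hprod x]
    set Q : ℝ := √|x i1| * √|x i2| with hQ
    rcases eq_or_lt_of_le (show (0:ℝ) ≤ Q by positivity) with hQ0 | hQpos
    · rw [← hQ0, ENNReal.ofReal_zero, ENNReal.div_zero (by
        simp only [ne_eq, ENNReal.ofReal_eq_zero, not_le]
        positivity)]
      exact le_top
    · have hx1 : x i1 ≠ 0 := by
        intro h
        rw [hQ, h] at hQpos
        simp at hQpos
      have hx : x ≠ 0 := fun h => hx1 (by rw [h]; rfl)
      have hs : 0 < ‖x‖ := norm_pos_iff.2 hx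
      have hsum_ge : x i1 ^ 2 + x i2 ^ 2 ≤ ‖x‖ ^ 2 - x i0 ^ 2 := by
        have hsub : ({i0, i1, i2} : Finset (Fin d)) ⊆ Finset.univ := Finset.subset_univ _
        have hle : ∑ i ∈ ({i0, i1, i2} : Finset (Fin d)), x i ^ 2 ≤ ∑ i, x i ^ 2 :=
          Finset.sum_le_sum_of_subset_of_nonneg hsub (fun i _ _ => sq_nonneg _)
        rw [Finset.sum_insert (by simp [h01, h02]), Finset.sum_insert (by simp [h12]),
          Finset.sum_singleton] at hle
        rw [my_norm_sq_eq]
        linarith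
    -- positivity of s'
      have hs'sq : (0:ℝ) < ‖x‖ ^ 2 - x i0 ^ 2 := by
        have : (0:ℝ) < x i1 ^ 2 := by positivity
        nlinarith [sq_nonneg (x i2)]
      set s' : ℝ := √(‖x‖ ^ 2 - x i0 ^ 2) with hs'
      have hs'pos : 0 < s' := Real.sqrt_pos.2 hs'sq
      have hsin : Real.sin (angle (EuclideanSpace.single i0 (1:ℝ)) x) = s' / ‖x‖ :=
        my_sin_angle_single hd0 x hx
      have hQle : Q ≤ s' := by
        rw [hQ, ← Real.sqrt_mul (abs_nonneg _)]
        have h1 : |x i1| * |x i2| ≤ ‖x‖ ^ 2 - x i0 ^ 2 := by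
          nlinarith [sq_abs (x i1), sq_abs (x i2), sq_nonneg (|x i1| - |x i2|), abs_nonneg (x i1),
            abs_nonneg (x i2)]
        calc √(|x i1| * |x i2|) ≤ √(‖x‖ ^ 2 - x i0 ^ 2) := Real.sqrt_le_sqrt h1
          _ = s' := rfl
      rw [hsin, ← ENNReal.ofReal_div_of_pos (div_pos hs'pos hs),
        ← ENNReal.ofReal_div_of_pos hQpos]
      apply ENNReal.ofReal_le_ofReal
      rw [div_div_eq_mul_div]
      have hnum : exp (-(4⁻¹ * ‖x‖ ^ 2)) * ‖x‖ ≤ 2 * exp (-(8⁻¹ * ‖x‖ ^ 2)) := by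
        have hkey : ‖x‖ ≤ 2 * exp (8⁻¹ * ‖x‖ ^ 2) := by
          nlinarith [add_one_le_exp (8⁻¹ * ‖x‖ ^ 2), sq_nonneg (‖x‖ - 2)]
        have harg : exp (-(4⁻¹ * ‖x‖ ^ 2)) * (2 * exp (8⁻¹ * ‖x‖ ^ 2))
            = 2 * exp (-(8⁻¹ * ‖x‖ ^ 2)) := by
          rw [mul_left_comm, ← Real.exp_add]
          norm_num
          ring_nf
        calc exp (-(4⁻¹ * ‖x‖ ^ 2)) * ‖x‖
            ≤ exp (-(4⁻¹ * ‖x‖ ^ 2)) * (2 * exp (8⁻¹ * ‖x‖ ^ 2)) := by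
              exact mul_le_mul_of_nonneg_left hkey (exp_pos _).le
          _ = 2 * exp (-(8⁻¹ * ‖x‖ ^ 2)) := harg
      exact div_le_div₀ (by positivity) hnum hQpos hQle
  -- assemble
  calc ∫⁻ x : E, ENNReal.ofReal (exp (-(4⁻¹ * ‖x‖ ^ 2)))
        / ENNReal.ofReal (Real.sin (angle (EuclideanSpace.single i0 (1:ℝ)) x))
      ≤ ∫⁻ x : E, ∏ i, g i (x i) := lintegral_mono hpoint
    _ = ∫⁻ y : Fin d → ℝ, ∏ i, g i (y i) :=
        (EuclideanSpace.volume_preserving_symm_measurableEquiv_toLp (Fin d)).lintegral_comp_emb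
          (MeasurableEquiv.measurableEmbedding _) (fun y => ∏ i, g i (y i))
    _ = ∏ i, ∫⁻ t : ℝ, g i t := my_lintegral_pi_prod g hgmeas
    _ < ⊤ := by
        refine ENNReal.prod_lt_top (fun i _ => ?_)
        rw [hgdef]
        by_cases hi0 : i = i0
        · simp only [hi0, if_true, if_neg h01, if_neg h02, pow_zero, mul_one]
          have : ∀ t : ℝ, ENNReal.ofReal (2 * exp (-(8⁻¹ * t ^ 2)))
              = (ENNReal.ofReal 2) * ENNReal.ofReal (exp (-(8⁻¹ * t ^ 2))) := fun t =>
            ENNReal.ofReal_mul (by norm_num)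
          simp_rw [this]
          rw [lintegral_const_mul' _ _ ENNReal.ofReal_ne_top]
          exact ENNReal.mul_lt_top ENNReal.ofReal_lt_top (my_gauss_1d (by norm_num))
        · by_cases hi1 : i = i1
          · subst hi1
            simp only [if_neg (Ne.symm h01), if_true, if_neg h12, one_mul,
              pow_one, pow_zero, mul_one]
            exact my_sing_1d
          · by_cases hi2 : i = i2
            · subst hi2
              simp only [if_neg (Ne.symm h02), if_neg (Ne.symm h12), if_true, one_mul,
                pow_one, pow_zero, mul_one]
              exact my_sing_1d
            · simp only [if_neg hi0, if_neg hi1, if_neg hi2, pow_zero, mul_one, one_mul]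
              exact my_gauss_1d (by norm_num)

end Core

section Main

open Real InnerProductGeometry

variable {d : ℕ}

local notation "E" => EuclideanSpace ℝ (Fin d)

lemma my_gauss_E : ∫⁻ v : E, ENNReal.ofReal (exp (-(2⁻¹ * ‖v‖ ^ 2))) < ⊤ := by
  have hpt : ∀ v : E, ENNReal.ofReal (exp (-(2⁻¹ * ‖v‖ ^ 2)))
      = ∏ i, ENNReal.ofReal (exp (-(2⁻¹ * (v i) ^ 2))) := by
    intro v
    rw [← my_ofReal_prod _ _ (fun i _ => (exp_pos _).le), ← Real.exp_sum]
    congr 2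
    rw [my_norm_sq_eq, Finset.mul_sum]
    simp
  simp_rw [hpt]
  calc ∫⁻ v : E, ∏ i, ENNReal.ofReal (exp (-(2⁻¹ * (v i) ^ 2)))
      = ∫⁻ y : Fin d → ℝ, ∏ i, ENNReal.ofReal (exp (-(2⁻¹ * (y i) ^ 2))) :=
        (EuclideanSpace.volume_preserving_symm_measurableEquiv_toLp (Fin d)).lintegral_comp_emb
          (MeasurableEquiv.measurableEmbedding _)
          (fun y : Fin d → ℝ => ∏ i, ENNReal.ofReal (exp (-(2⁻¹ * (y i) ^ 2))))
    _ = ∏ _i : Fin d, ∫⁻ t : ℝ, ENNReal.ofReal (exp (-(2⁻¹ * t ^ 2))) :=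
        my_lintegral_pi_prod (fun _ t => ENNReal.ofReal (exp (-(2⁻¹ * t ^ 2))))
          (fun i => by fun_prop)
    _ < ⊤ := ENNReal.prod_lt_top (fun i _ => my_gauss_1d (by norm_num))

lemma my_J_le_K (hd : 3 ≤ d) (u : E) :
    ∫⁻ x : E, ENNReal.ofReal (exp (-(4⁻¹ * ‖x‖ ^ 2))) / ENNReal.ofReal (Real.sin (angle u x))
    ≤ ∫⁻ x : E, ENNReal.ofReal (exp (-(4⁻¹ * ‖x‖ ^ 2)))
        / ENNReal.ofReal (Real.sin (angle (EuclideanSpace.single (⟨0, by omega⟩ : Fin d) (1:ℝ)) x)) := by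
  set e1 : E := EuclideanSpace.single (⟨0, by omega⟩ : Fin d) (1:ℝ) with he1
  have he1n : ‖e1‖ = 1 := by rw [he1, EuclideanSpace.norm_single, norm_one]
  by_cases hu : u = 0
  · subst hu
    refine lintegral_mono (fun x => ?_)
    rw [angle_zero_left, Real.sin_pi_div_two, ENNReal.ofReal_one, div_one]
    have hS : ENNReal.ofReal (Real.sin (angle e1 x)) ≤ 1 := by
      rw [← ENNReal.ofReal_one]
      exact ENNReal.ofReal_le_ofReal (Real.sin_le_one _)
    calc ENNReal.ofReal (exp (-(4⁻¹ * ‖x‖ ^ 2)))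
        = ENNReal.ofReal (exp (-(4⁻¹ * ‖x‖ ^ 2))) / 1 := (div_one _).symm
      _ ≤ _ := ENNReal.div_le_div le_rfl hS
  · set u' : E := ‖u‖⁻¹ • u with hu'
    have hun : ‖u'‖ = 1 := norm_smul_inv_norm hu
    have hang : ∀ x : E, angle u x = angle u' x := fun x =>
      (angle_smul_left_of_pos u x (inv_pos.2 (norm_pos_iff.2 hu))).symm
    set R : E ≃ₗᵢ[ℝ] E := (Submodule.reflection (ℝ ∙ (u' - e1))ᗮ) with hRdef
    have hR : R u' = e1 := Submodule.reflection_sub (by rw [hun, he1n])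
    have hmp : MeasurePreserving (⇑R.symm) (volume : Measure E) volume :=
      R.symm.measurePreserving
    have hcomp := hmp.lintegral_comp_emb (R.symm.toHomeomorph.measurableEmbedding)
      (fun x : E => ENNReal.ofReal (exp (-(4⁻¹ * ‖x‖ ^ 2)))
        / ENNReal.ofReal (Real.sin (angle u' x)))
    simp_rw [hang]
    rw [← hcomp]
    refine le_of_eq (lintegral_congr (fun y => ?_))
    have h1 : ‖R.symm y‖ = ‖y‖ := R.symm.norm_map y
    have h2 : angle u' (R.symm y) = angle e1 y := by
      have := R.toLinearIsometry.angle_map u' (R.symm y)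
      rw [LinearIsometryEquiv.coe_toLinearIsometry] at this
      rw [← this, hR, LinearIsometryEquiv.apply_symm_apply]
    rw [h1, h2]

end Main

/-- **Uniform bound on the sine-singularity Gaussian integral** (Section 3.4):
for `d ≥ 3` there is a finite constant `C_d` such that for every `a ∈ ℝᵈ`,
`∫∫ e^{−|v|²−|w|²} / sin∠(a−v, w−v) dw dv ≤ C_d`,
the integrand being `+∞` where the sine of the angle vanishes (division in `ℝ≥0∞`). -/
theorem sine_singularity_integral_bound (d : ℕ) (hd : 3 ≤ d) :
    ∃ C : ℝ, ∀ a : EuclideanSpace ℝ (Fin d),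
      (∫⁻ v : EuclideanSpace ℝ (Fin d), ∫⁻ w : EuclideanSpace ℝ (Fin d),
          ENNReal.ofReal (Real.exp (-‖v‖ ^ 2 - ‖w‖ ^ 2))
            / ENNReal.ofReal (Real.sin (InnerProductGeometry.angle (a - v) (w - v))))
        ≤ ENNReal.ofReal C := by
  classical
  set E' := EuclideanSpace ℝ (Fin d)
  set e1 : E' := EuclideanSpace.single (⟨0, by omega⟩ : Fin d) (1:ℝ) with he1
  set K : ℝ≥0∞ := ∫⁻ x : E', ENNReal.ofReal (Real.exp (-(4⁻¹ * ‖x‖ ^ 2)))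
      / ENNReal.ofReal (Real.sin (InnerProductGeometry.angle e1 x)) with hKdef
  have hK : K < ⊤ := my_K_lt_top hd
  set G : ℝ≥0∞ := ∫⁻ v : E', ENNReal.ofReal (Real.exp (-(2⁻¹ * ‖v‖ ^ 2))) with hGdef
  have hG : G < ⊤ := my_gauss_E
  refine ⟨(G * K).toReal, fun a => ?_⟩
  have hfin : G * K ≠ ⊤ := ENNReal.mul_ne_top hG.ne hK.ne
  rw [ENNReal.ofReal_toReal hfin]
  have inner_step : ∀ v : E',
      (∫⁻ w : E', ENNReal.ofReal (Real.exp (-‖v‖ ^ 2 - ‖w‖ ^ 2))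
          / ENNReal.ofReal (Real.sin (InnerProductGeometry.angle (a - v) (w - v))))
      ≤ ENNReal.ofReal (Real.exp (-(2⁻¹ * ‖v‖ ^ 2))) * K := by
    intro v
    have htrans : (∫⁻ w : E', ENNReal.ofReal (Real.exp (-‖v‖ ^ 2 - ‖w‖ ^ 2))
          / ENNReal.ofReal (Real.sin (InnerProductGeometry.angle (a - v) (w - v))))
        = ∫⁻ x : E', ENNReal.ofReal (Real.exp (-‖v‖ ^ 2 - ‖x + v‖ ^ 2))
          / ENNReal.ofReal (Real.sin (InnerProductGeometry.angle (a - v) x)) := by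
      rw [← lintegral_add_right_eq_self (fun w : E' =>
        ENNReal.ofReal (Real.exp (-‖v‖ ^ 2 - ‖w‖ ^ 2))
          / ENNReal.ofReal (Real.sin (InnerProductGeometry.angle (a - v) (w - v)))) v]
      simp [add_sub_cancel_right]
    rw [htrans]
    have hbd : ∀ x : E',
        ENNReal.ofReal (Real.exp (-‖v‖ ^ 2 - ‖x + v‖ ^ 2))
          / ENNReal.ofReal (Real.sin (InnerProductGeometry.angle (a - v) x))
        ≤ ENNReal.ofReal (Real.exp (-(2⁻¹ * ‖v‖ ^ 2)))
            * (ENNReal.ofReal (Real.exp (-(4⁻¹ * ‖x‖ ^ 2)))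
              / ENNReal.ofReal (Real.sin (InnerProductGeometry.angle (a - v) x))) := by
      intro x
      rw [← mul_div_assoc, ← ENNReal.ofReal_mul (Real.exp_pos _).le, ← Real.exp_add]
      have hxle : ‖x‖ ≤ ‖x + v‖ + ‖v‖ := by
        have := norm_sub_le (x + v) v
        simpa using this
      refine ENNReal.div_le_div (ENNReal.ofReal_le_ofReal (Real.exp_le_exp.2 ?_)) le_rfl
      have h2 : ‖x‖ ^ 2 ≤ (‖x + v‖ + ‖v‖) ^ 2 := by
        nlinarith [norm_nonneg x, norm_nonneg v, norm_nonneg (x + v)]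
      have h3 : (‖x + v‖ + ‖v‖) ^ 2 ≤ 2 * ‖x + v‖ ^ 2 + 2 * ‖v‖ ^ 2 := by
        nlinarith [sq_nonneg (‖x + v‖ - ‖v‖)]
      nlinarith [h2, h3]
    calc (∫⁻ x : E', ENNReal.ofReal (Real.exp (-‖v‖ ^ 2 - ‖x + v‖ ^ 2))
          / ENNReal.ofReal (Real.sin (InnerProductGeometry.angle (a - v) x)))
        ≤ ∫⁻ x : E', ENNReal.ofReal (Real.exp (-(2⁻¹ * ‖v‖ ^ 2)))
            * (ENNReal.ofReal (Real.exp (-(4⁻¹ * ‖x‖ ^ 2)))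
              / ENNReal.ofReal (Real.sin (InnerProductGeometry.angle (a - v) x))) :=
          lintegral_mono hbd
      _ = ENNReal.ofReal (Real.exp (-(2⁻¹ * ‖v‖ ^ 2)))
            * ∫⁻ x : E', ENNReal.ofReal (Real.exp (-(4⁻¹ * ‖x‖ ^ 2)))
              / ENNReal.ofReal (Real.sin (InnerProductGeometry.angle (a - v) x)) :=
          lintegral_const_mul' _ _ ENNReal.ofReal_ne_top
      _ ≤ ENNReal.ofReal (Real.exp (-(2⁻¹ * ‖v‖ ^ 2))) * K := by
          exact mul_le_mul_right (my_J_le_K hd (a - v)) _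
  calc (∫⁻ v : E', ∫⁻ w : E',
          ENNReal.ofReal (Real.exp (-‖v‖ ^ 2 - ‖w‖ ^ 2))
            / ENNReal.ofReal (Real.sin (InnerProductGeometry.angle (a - v) (w - v))))
      ≤ ∫⁻ v : E', ENNReal.ofReal (Real.exp (-(2⁻¹ * ‖v‖ ^ 2))) * K := lintegral_mono inner_step
    _ = G * K := lintegral_mul_const' _ _ hK.ne
    _ ≤ G * K := le_rfl
end

section
/- Let d ≥ 2. There exists a constant C_d, depending only on d, such that for all linearly independent unit vectors a, b ∈ ℝ^d, all points p, q ∈ ℝ^d and all ε > 0, the Lebesgue measure of the intersection of the two cylinders { x ∈ ℝ^d : dist(x, p + ℝa) ≤ ε } ∩ { x ∈ ℝ^d : dist(x, q + ℝb) ≤ ε } is at most C_d · ε^d / sin∠(a, b), where ∠(a, b) ∈ (0, π) is the angle between a and b. -/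
open MeasureTheory

open RealInnerProductSpace in
/-- If `w ⊥ a` then `‖w‖ ≤ ‖w + c • a‖`. -/
lemma norm_le_norm_add_smul_of_inner_eq_zero {E : Type*} [NormedAddCommGroup E]
    [InnerProductSpace ℝ E] {w a : E} (h : ⟪w, a⟫ = 0) (c : ℝ) : ‖w‖ ≤ ‖w + c • a‖ := by
  have h2 : ‖w + c • a‖ ^ 2 = ‖w‖ ^ 2 + ‖c • a‖ ^ 2 := by
    rw [norm_add_sq_real, real_inner_smul_right, h]
    ring
  nlinarith [norm_nonneg w, norm_nonneg (w + c • a), norm_nonneg (c • a)]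

open RealInnerProductSpace in
/-- distance to line bound: projection orthogonal to the direction. -/
lemma proj_norm_le_of_infDist_le {E : Type*} [NormedAddCommGroup E]
    [InnerProductSpace ℝ E] {a : E} (ha : ‖a‖ = 1) (p x : E) {ε : ℝ}
    (h : Metric.infDist x (Set.range fun t : ℝ => p + t • a) ≤ ε) :
    ‖(x - p) - ⟪x - p, a⟫ • a‖ ≤ ε := by
  set w := (x - p) - ⟪x - p, a⟫ • a with hw
  have hwa : ⟪w, a⟫ = 0 := by
    simp only [hw, inner_sub_left, real_inner_smul_left, real_inner_self_eq_norm_sq, ha]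
    ring
  have key : ∀ t : ℝ, ‖w‖ ≤ dist x (p + t • a) := by
    intro t
    have hx : x - (p + t • a) = w + (⟪x - p, a⟫ - t) • a := by
      simp only [hw, sub_smul]; abel
    rw [dist_eq_norm, hx]
    exact norm_le_norm_add_smul_of_inner_eq_zero hwa _
  refine le_trans (le_of_not_gt fun hlt => ?_) h
  obtain ⟨y, ⟨t, rfl⟩, hy⟩ := (Metric.infDist_lt_iff (Set.range_nonempty _)).1 hlt
  exact absurd hy (not_lt.2 (key t))

open RealInnerProductSpace in
/-- Projection orthogonal to a unit vector is a contraction. -/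
lemma norm_sub_inner_smul_le {E : Type*} [NormedAddCommGroup E]
    [InnerProductSpace ℝ E] {b : E} (hb : ‖b‖ = 1) (v : E) :
    ‖v - ⟪v, b⟫ • b‖ ≤ ‖v‖ := by
  have hwb : ⟪v - ⟪v, b⟫ • b, b⟫ = 0 := by
    simp only [inner_sub_left, real_inner_smul_left, real_inner_self_eq_norm_sq, hb]
    ring
  have := norm_le_norm_add_smul_of_inner_eq_zero hwb ⟪v, b⟫
  simpa using this

open RealInnerProductSpace in
/-- Key transversality estimate. -/
lemma key_transversal {E : Type*} [NormedAddCommGroup E]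
    [InnerProductSpace ℝ E] {a b : E} (hb : ‖b‖ = 1) (u : E) :
    |⟪u, a⟫| * ‖a - ⟪a, b⟫ • b‖ ≤ ‖u - ⟪u, a⟫ • a‖ + ‖u - ⟪u, b⟫ • b‖ := by
  set wa := u - ⟪u, a⟫ • a with hwa
  have hid : ⟪u, a⟫ • (a - ⟪a, b⟫ • b) = (u - ⟪u, b⟫ • b) - (wa - ⟪wa, b⟫ • b) := by
    simp only [hwa, inner_sub_left, real_inner_smul_left, smul_sub, sub_smul, smul_smul]
    abel
  calc |⟪u, a⟫| * ‖a - ⟪a, b⟫ • b‖ = ‖⟪u, a⟫ • (a - ⟪a, b⟫ • b)‖ := by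
        rw [norm_smul, Real.norm_eq_abs]
    _ = ‖(u - ⟪u, b⟫ • b) - (wa - ⟪wa, b⟫ • b)‖ := by rw [hid]
    _ ≤ ‖u - ⟪u, b⟫ • b‖ + ‖wa - ⟪wa, b⟫ • b‖ := norm_sub_le _ _
    _ ≤ ‖u - ⟪u, b⟫ • b‖ + ‖wa‖ := by
        exact add_le_add le_rfl (norm_sub_inner_smul_le hb wa)
    _ = ‖u - ⟪u, a⟫ • a‖ + ‖u - ⟪u, b⟫ • b‖ := by rw [add_comm]

open RealInnerProductSpace InnerProductGeometry in
lemma sin_angle_eq {E : Type*} [NormedAddCommGroup E]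
    [InnerProductSpace ℝ E] {a b : E} (ha : ‖a‖ = 1) (hb : ‖b‖ = 1) :
    ‖a - ⟪a, b⟫ • b‖ = Real.sin (angle a b) := by
  have h1 : Real.sin (angle a b) * (‖a‖ * ‖b‖) = Real.sqrt (1 - ⟪a, b⟫ * ⟪a, b⟫) := by
    rw [sin_angle_mul_norm_mul_norm, real_inner_self_eq_norm_sq,
      real_inner_self_eq_norm_sq, ha, hb]
    norm_num
  have h2 : ‖a - ⟪a, b⟫ • b‖ ^ 2 = 1 - ⟪a, b⟫ * ⟪a, b⟫ := by
    rw [norm_sub_sq_real, real_inner_smul_right, norm_smul, Real.norm_eq_abs, mul_pow,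
      sq_abs, ha, hb]
    ring
  rw [ha, hb] at h1
  rw [← Real.sqrt_sq (norm_nonneg (a - ⟪a, b⟫ • b)), h2, ← h1]
  ring_nf

open RealInnerProductSpace InnerProductGeometry in
lemma sin_angle_pos {E : Type*} [NormedAddCommGroup E]
    [InnerProductSpace ℝ E] {a b : E} (ha : ‖a‖ = 1) (hb : ‖b‖ = 1)
    (hli : LinearIndependent ℝ ![a, b]) : 0 < Real.sin (angle a b) := by
  have ha0 : a ≠ 0 := fun h => by simp [h] at ha
  have hb0 : b ≠ 0 := fun h => by simp [h] at hb
  have habs : |⟪a, b⟫| < 1 := by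
    rcases lt_or_eq_of_le (abs_real_inner_le_norm a b) with h | h
    · rwa [ha, hb, mul_one] at h
    · exfalso
      have : ‖⟪a, b⟫‖ = ‖a‖ * ‖b‖ := by rwa [Real.norm_eq_abs]
      obtain ⟨r, hr, hba⟩ := (norm_inner_eq_norm_iff ha0 hb0).1 this
      rw [linearIndependent_fin2] at hli
      exact hli.2 r⁻¹ (by simp [hba, smul_smul, inv_mul_cancel₀ hr])
  rw [← sin_angle_eq ha hb]
  have h2 : ‖a - ⟪a, b⟫ • b‖ ^ 2 = 1 - ⟪a, b⟫ * ⟪a, b⟫ := by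
    rw [norm_sub_sq_real, real_inner_smul_right, norm_smul, Real.norm_eq_abs, mul_pow,
      sq_abs, ha, hb]
    ring
  have : (0:ℝ) < 1 - ⟪a, b⟫ * ⟪a, b⟫ := by nlinarith [abs_nonneg ⟪a, b⟫, sq_abs ⟪a, b⟫]
  nlinarith [norm_nonneg (a - ⟪a, b⟫ • b)]


open RealInnerProductSpace InnerProductGeometry in
/-- **Volume of the intersection of two transversal cylinders** (Section 3.3):
for `d ≥ 2` there is a constant `C_d` such that for all linearly independent unit
vectors `a, b`, all `p, q ∈ ℝᵈ` and all `ε > 0`, the Lebesgue measure of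
`{x : dist(x, p + ℝa) ≤ ε} ∩ {x : dist(x, q + ℝb) ≤ ε}` is at most
`C_d ε^d / sin∠(a, b)`. -/
theorem cylinder_intersection_volume_bound (d : ℕ) (hd : 2 ≤ d) :
    ∃ C : ℝ, ∀ a b : EuclideanSpace ℝ (Fin d), ‖a‖ = 1 → ‖b‖ = 1 →
      LinearIndependent ℝ ![a, b] →
      ∀ p q : EuclideanSpace ℝ (Fin d), ∀ ε : ℝ, 0 < ε →
        volume ({x : EuclideanSpace ℝ (Fin d) |
            Metric.infDist x (Set.range fun t : ℝ => p + t • a) ≤ ε}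
          ∩ {x : EuclideanSpace ℝ (Fin d) |
            Metric.infDist x (Set.range fun t : ℝ => q + t • b) ≤ ε})
          ≤ ENNReal.ofReal (C * ε ^ d / Real.sin (InnerProductGeometry.angle a b)) := by
  obtain ⟨m, rfl⟩ : ∃ m, d = m + 2 := ⟨d - 2, by omega⟩
  refine ⟨2 * 4 ^ (m + 2), ?_⟩
  intro a b ha hb hli p q ε hε
  set θ := Real.sin (angle a b) with hθdef
  have hθ : 0 < θ := sin_angle_pos ha hb hli
  rcases Set.eq_empty_or_nonempty
      ({x : EuclideanSpace ℝ (Fin (m + 2)) |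
          Metric.infDist x (Set.range fun t : ℝ => p + t • a) ≤ ε}
        ∩ {x : EuclideanSpace ℝ (Fin (m + 2)) |
          Metric.infDist x (Set.range fun t : ℝ => q + t • b) ≤ ε}) with hS | hS
  · rw [hS, measure_empty]; exact zero_le
  obtain ⟨x0, hx0a, hx0b⟩ := hS
  -- orthonormal basis with `B 0 = a`
  have hon : Orthonormal ℝ (({0} : Set (Fin (m + 2))).restrict fun _ => a) := by
    constructor
    · intro i; exact ha
    · intro i j hij
      exact absurd (Subtype.ext (by
        have hi := i.2; have hj := j.2
        simp only [Set.mem_singleton_iff] at hi hj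
        rw [hi, hj])) hij
  obtain ⟨B, hB⟩ := hon.exists_orthonormalBasis_extension_of_card_eq
      (by simp [finrank_euclideanSpace_fin])
  have hB0 : B 0 = a := hB 0 rfl
  set L : ℝ := 4 * ε / θ with hLdef
  set r : Fin (m + 2) → ℝ := fun i => if i = 0 then L else 2 * ε with hrdef
  set T : Set (EuclideanSpace ℝ (Fin (m + 2))) :=
    WithLp.ofLp ⁻¹' (Set.univ.pi fun i => Set.Icc (-(r i)) (r i)) with hTdef
  -- the pointwise estimates
  have proj_bound : ∀ c : EuclideanSpace ℝ (Fin (m + 2)), ‖c‖ = 1 →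
      ∀ z w : EuclideanSpace ℝ (Fin (m + 2)),
      Metric.infDist z (Set.range fun t : ℝ => w + t • c) ≤ ε →
      Metric.infDist x0 (Set.range fun t : ℝ => w + t • c) ≤ ε →
      ‖(z - x0) - ⟪z - x0, c⟫ • c‖ ≤ 2 * ε := by
    intro c hc z w h1 h2
    have e1 : (z - x0) - ⟪z - x0, c⟫ • c
        = ((z - w) - ⟪z - w, c⟫ • c) - ((x0 - w) - ⟪x0 - w, c⟫ • c) := by
      rw [show z - x0 = (z - w) - (x0 - w) by abel]
      rw [inner_sub_left, sub_smul]
      abel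
    rw [e1]
    calc ‖((z - w) - ⟪z - w, c⟫ • c) - ((x0 - w) - ⟪x0 - w, c⟫ • c)‖
        ≤ ‖(z - w) - ⟪z - w, c⟫ • c‖ + ‖(x0 - w) - ⟪x0 - w, c⟫ • c‖ := norm_sub_le _ _
      _ ≤ ε + ε := add_le_add (proj_norm_le_of_infDist_le hc w z h1)
          (proj_norm_le_of_infDist_le hc w x0 h2)
      _ = 2 * ε := by ring
  have hsub : ({x : EuclideanSpace ℝ (Fin (m + 2)) |
          Metric.infDist x (Set.range fun t : ℝ => p + t • a) ≤ ε}
        ∩ {x : EuclideanSpace ℝ (Fin (m + 2)) |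
          Metric.infDist x (Set.range fun t : ℝ => q + t • b) ≤ ε})
      ⊆ (fun x => B.repr (x + -x0)) ⁻¹' T := by
    rintro x ⟨hxa, hxb⟩
    have hwa : ‖(x - x0) - ⟪x - x0, a⟫ • a‖ ≤ 2 * ε := proj_bound a ha x p hxa hx0a
    have hwb : ‖(x - x0) - ⟪x - x0, b⟫ • b‖ ≤ 2 * ε := proj_bound b hb x q hxb hx0b
    intro i _
    have hrepr : B.repr (x + -x0) i = ⟪B i, x - x0⟫ := by
      rw [B.repr_apply_apply]; norm_num [sub_eq_add_neg]
    simp only [Set.mem_Icc, hrepr, ← abs_le]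
    rcases eq_or_ne i 0 with rfl | hi
    · have key := key_transversal (a := a) hb (x - x0)
      rw [sin_angle_eq ha hb, ← hθdef] at key
      have h4 : |⟪x - x0, a⟫| * θ ≤ 4 * ε := by
        calc |⟪x - x0, a⟫| * θ ≤ ‖(x - x0) - ⟪x - x0, a⟫ • a‖
              + ‖(x - x0) - ⟪x - x0, b⟫ • b‖ := key
          _ ≤ 2 * ε + 2 * ε := add_le_add hwa hwb
          _ = 4 * ε := by ring
      have hL : |⟪x - x0, a⟫| ≤ L := by
        rw [hLdef, le_div_iff₀ hθ]; exact h4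
      rw [hB0, real_inner_comm]
      show |⟪x - x0, a⟫| ≤ if (0 : Fin (m + 2)) = 0 then L else 2 * ε
      rw [if_pos rfl]
      exact hL
    · have horth : ⟪B i, a⟫ = 0 := by
        rw [← hB0]; exact B.orthonormal.2 hi
      have e2 : ⟪B i, (x - x0) - ⟪x - x0, a⟫ • a⟫ = ⟪B i, x - x0⟫ := by
        rw [inner_sub_right, real_inner_smul_right, horth, mul_zero, sub_zero]
      have : |⟪B i, x - x0⟫| ≤ 2 * ε := by
        rw [← e2]
        calc |⟪B i, (x - x0) - ⟪x - x0, a⟫ • a⟫|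
            ≤ ‖B i‖ * ‖(x - x0) - ⟪x - x0, a⟫ • a‖ := abs_real_inner_le_norm _ _
          _ = ‖(x - x0) - ⟪x - x0, a⟫ • a‖ := by rw [B.orthonormal.1 i, one_mul]
          _ ≤ 2 * ε := hwa
      show |⟪B i, x - x0⟫| ≤ if i = 0 then L else 2 * ε
      rw [if_neg hi]
      exact this
  have hT : MeasurableSet T :=
    (MeasurableSet.univ_pi fun i => measurableSet_Icc).preimage (PiLp.volume_preserving_ofLp _).measurable
  calc volume ({x : EuclideanSpace ℝ (Fin (m + 2)) |
          Metric.infDist x (Set.range fun t : ℝ => p + t • a) ≤ ε}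
        ∩ {x : EuclideanSpace ℝ (Fin (m + 2)) |
          Metric.infDist x (Set.range fun t : ℝ => q + t • b) ≤ ε})
      ≤ volume ((fun x => B.repr (x + -x0)) ⁻¹' T) := measure_mono hsub
    _ = volume ((fun x : EuclideanSpace ℝ (Fin (m + 2)) => x + -x0) ⁻¹' (B.repr ⁻¹' T)) := rfl
    _ = volume (B.repr ⁻¹' T) := measure_preimage_add_right volume (-x0) _
    _ = volume T := B.measurePreserving_repr.measure_preimage hT.nullMeasurableSet
    _ = volume ((MeasurableEquiv.toLp 2 (Fin (m + 2) → ℝ)).symm ⁻¹'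
          (Set.univ.pi fun i => Set.Icc (-(r i)) (r i) : Set (Fin (m + 2) → ℝ))) := by
        rfl
    _ = volume (Set.univ.pi fun i => Set.Icc (-(r i)) (r i) : Set (Fin (m + 2) → ℝ)) :=
        (EuclideanSpace.volume_preserving_symm_measurableEquiv_toLp (Fin (m + 2))).measure_preimage
          (MeasurableSet.univ_pi fun i => measurableSet_Icc).nullMeasurableSet
    _ = ∏ i, volume (Set.Icc (-(r i)) (r i)) := volume_pi_pi _
    _ = ∏ i, ENNReal.ofReal (2 * r i) := by
        refine Finset.prod_congr rfl fun i _ => ?_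
        rw [Real.volume_Icc]; congr 1; ring
    _ = ENNReal.ofReal (∏ i, 2 * r i) := by
        rw [ENNReal.ofReal_prod_of_nonneg]
        intro i _
        rcases eq_or_ne i 0 with rfl | hi
        · show (0:ℝ) ≤ 2 * if (0 : Fin (m + 2)) = 0 then L else 2 * ε
          rw [if_pos rfl, hLdef]
          positivity
        · show (0:ℝ) ≤ 2 * if i = 0 then L else 2 * ε
          rw [if_neg hi]
          positivity
    _ ≤ ENNReal.ofReal (2 * 4 ^ (m + 2) * ε ^ (m + 2) / θ) := by
        apply ENNReal.ofReal_le_ofReal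
        have hprod : (∏ i, 2 * r i) = (2 * L) * (2 * (2 * ε)) ^ (m + 2 - 1) := by
          rw [← Finset.mul_prod_erase Finset.univ _ (Finset.mem_univ 0)]
          simp only [hrdef, if_pos rfl]
          congr 1
          rw [Finset.prod_congr rfl (fun i hi => by
            rw [if_neg (Finset.ne_of_mem_erase hi)]), Finset.prod_const,
            Finset.card_erase_of_mem (Finset.mem_univ 0), Finset.card_univ, Fintype.card_fin]
        rw [hprod, hLdef]
        have h1 : m + 2 - 1 = m + 1 := rfl
        rw [h1]
        apply le_of_eq
        field_simp
        ring
end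

section
/- Let β > 0. There exists a constant C (depending only on β) such that for every v ∈ ℝ³, ∫_{ℝ³} ∫_{𝕊²} ⟨v − v₂, ω⟩_+ M_β(v₂) exp( (β/4) |v'|² ) dω dv₂ ≤ C · exp( (β/4) |v|² ) / (1 + |v|), where v' := v − ⟨v − v₂, ω⟩ω. -/
open scoped RealInnerProductSpace
open MeasureTheory

namespace WGEaux

open Real Set Metric

local notation "E3" => EuclideanSpace ℝ (Fin 3)

lemma mul_exp_sq_le {c : ℝ} (hc : 0 < c) {s : ℝ} (hs : 0 ≤ s) :
    s * rexp (-(c * s ^ 2)) ≤ Real.sqrt c⁻¹ := by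
  have h1 : c * s ^ 2 ≤ rexp (c * s ^ 2) := by
    have := Real.add_one_le_exp (c * s ^ 2); linarith
  have hsq : s ^ 2 ≤ c⁻¹ * rexp (c * s ^ 2) := by
    have h2 := mul_le_mul_of_nonneg_left h1 (inv_pos.2 hc).le
    calc s ^ 2 = c⁻¹ * (c * s ^ 2) := by field_simp
    _ ≤ c⁻¹ * rexp (c * s ^ 2) := h2
  have h2 : s ≤ Real.sqrt c⁻¹ * rexp (c * s ^ 2 / 2) := by
    calc s = Real.sqrt (s ^ 2) := (Real.sqrt_sq hs).symm
    _ ≤ Real.sqrt (c⁻¹ * rexp (c * s ^ 2)) := Real.sqrt_le_sqrt hsq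
    _ = Real.sqrt c⁻¹ * rexp (c * s ^ 2 / 2) := by
        rw [Real.sqrt_mul (by positivity), Real.exp_half]
  calc s * rexp (-(c * s ^ 2))
      ≤ (Real.sqrt c⁻¹ * rexp (c * s ^ 2 / 2)) * rexp (-(c * s ^ 2)) :=
        mul_le_mul_of_nonneg_right h2 (Real.exp_pos _).le
  _ = Real.sqrt c⁻¹ * rexp (c * s ^ 2 / 2 + -(c * s ^ 2)) := by
        rw [mul_assoc, ← Real.exp_add]
  _ ≤ Real.sqrt c⁻¹ * 1 := by
        refine mul_le_mul_of_nonneg_left ?_ (Real.sqrt_nonneg _)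
        rw [Real.exp_le_one_iff]; nlinarith [sq_nonneg s]
  _ = Real.sqrt c⁻¹ := mul_one _

lemma collision (v v₂ ω : EuclideanSpace ℝ (Fin 3)) (hω : ‖ω‖ = 1) :
    ‖v - ⟪v - v₂, ω⟫ • ω‖ ^ 2 = ‖v‖ ^ 2 - ⟪v, ω⟫ ^ 2 + ⟪v₂, ω⟫ ^ 2 := by
  rw [norm_sub_sq_real, real_inner_smul_right, norm_smul, hω, inner_sub_left]
  rw [Real.norm_eq_abs, mul_one, sq_abs]
  ring

lemma sphere_integral_eq (g : EuclideanSpace ℝ (Fin 3) → ℝ) :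
    ∫ ω : Metric.sphere (0 : EuclideanSpace ℝ (Fin 3)) 1, g ω
        ∂((volume : Measure (EuclideanSpace ℝ (Fin 3))).toSphere)
      = 3 * ∫ x in Metric.ball (0 : EuclideanSpace ℝ (Fin 3)) 1, g (‖x‖⁻¹ • x) := by
  classical
  have hdim : Module.finrank ℝ E3 = 3 := finrank_euclideanSpace_fin
  set o : Set.Ioi (0 : ℝ) := ⟨1, Set.mem_Ioi.2 one_pos⟩ with ho
  set Φ : Metric.sphere (0 : E3) 1 × Set.Ioi (0 : ℝ) → ℝ :=
    fun p => g p.1 * Set.indicator (Set.Iio o) (1 : Set.Ioi (0 : ℝ) → ℝ) p.2 with hΦ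
  have key : (∫ x : ({0}ᶜ : Set E3), Φ (homeomorphUnitSphereProd E3 x)
        ∂((volume : Measure E3).comap Subtype.val))
      = ∫ p, Φ p ∂(((volume : Measure E3).toSphere).prod
          (Measure.volumeIoiPow (Module.finrank ℝ E3 - 1))) :=
    (volume : Measure E3).measurePreserving_homeomorphUnitSphereProd.integral_comp
      (Homeomorph.measurableEmbedding _) Φ
  have hfun : ∀ x : ({0}ᶜ : Set E3), Φ (homeomorphUnitSphereProd E3 x)
      = (Metric.ball (0 : E3) 1).indicator (fun y => g (‖y‖⁻¹ • y)) x.1 := by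
    intro x
    by_cases hx : (x : E3) ∈ Metric.ball (0 : E3) 1
    · rw [Set.indicator_of_mem hx]
      have h2 : (homeomorphUnitSphereProd E3 x).2 ∈ Set.Iio o := by
        rw [Set.mem_Iio, ho, Subtype.mk_lt_mk]
        simpa [mem_ball_zero_iff] using hx
      rw [hΦ]
      simp only [Set.indicator_of_mem h2, Pi.one_apply, mul_one]
      exact congrArg g (one_smul ℝ (‖(x : E3)‖⁻¹ • (x : E3)))
    · rw [Set.indicator_of_notMem hx]
      have h2 : (homeomorphUnitSphereProd E3 x).2 ∉ Set.Iio o := by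
        rw [Set.mem_Iio, ho, Subtype.mk_lt_mk]
        simpa [mem_ball_zero_iff] using hx
      rw [hΦ]
      simp only [Set.indicator_of_notMem h2, mul_zero]
  have hleft : (∫ x : ({0}ᶜ : Set E3), Φ (homeomorphUnitSphereProd E3 x)
        ∂((volume : Measure E3).comap Subtype.val))
      = ∫ x in Metric.ball (0 : E3) 1, g (‖x‖⁻¹ • x) := by
    simp only [hfun]
    rw [integral_subtype_comap (measurableSet_singleton (0 : E3)).compl,
      MeasureTheory.restrict_compl_singleton, integral_indicator measurableSet_ball]
  have hright : (∫ p, Φ p ∂(((volume : Measure E3).toSphere).prod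
          (Measure.volumeIoiPow (Module.finrank ℝ E3 - 1))))
      = (∫ ω : Metric.sphere (0 : E3) 1, g ω ∂((volume : Measure E3).toSphere)) * (3 : ℝ)⁻¹ := by
    rw [hΦ]
    rw [integral_prod_mul (f := fun ω : Metric.sphere (0 : E3) 1 => g ω)
      (g := fun r : Set.Ioi (0 : ℝ) => Set.indicator (Set.Iio o) (1 : Set.Ioi (0 : ℝ) → ℝ) r)]
    congr 1
    rw [integral_indicator_one measurableSet_Iio, ho, measureReal_def, Measure.volumeIoiPow_apply_Iio]
    rw [hdim]
    norm_num
  rw [hleft, hright] at key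
  rw [key]; ring

lemma norm_sq_eq_sum (x : EuclideanSpace ℝ (Fin 3)) : ‖x‖ ^ 2 = ∑ i, x i ^ 2 := by
  rw [EuclideanSpace.norm_eq, Real.sq_sqrt (by positivity)]
  simp [sq_abs]

lemma integrable_gauss_E3 {c : ℝ} (hc : 0 < c) :
    Integrable (fun x : EuclideanSpace ℝ (Fin 3) => rexp (-(c * ‖x‖ ^ 2))) := by
  have h1 : Integrable (fun z : Fin 3 → ℝ => ∏ i, rexp (-(c * z i ^ 2))) :=
    Integrable.fintype_prod (f := fun _ t => rexp (-(c * t ^ 2)))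
      (fun _ => by simpa [neg_mul] using integrable_exp_neg_mul_sq hc)
  have h2 := ((EuclideanSpace.volume_preserving_symm_measurableEquiv_toLp (Fin 3)).integrable_comp_emb
      (MeasurableEquiv.measurableEmbedding _)).2 h1
  have heq : (fun x : E3 => rexp (-(c * ‖x‖ ^ 2)))
      = (fun z : Fin 3 → ℝ => ∏ i, rexp (-(c * z i ^ 2)))
        ∘ ((MeasurableEquiv.toLp 2 (Fin 3 → ℝ)).symm) := by
    funext x
    simp only [Function.comp_apply, ← Real.exp_sum]
    congr 1
    rw [norm_sq_eq_sum]
    simp [Finset.mul_sum]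
  rw [heq]; exact h2

lemma abs_apply_le_norm (y : EuclideanSpace ℝ (Fin 3)) (i : Fin 3) : |y i| ≤ ‖y‖ := by
  have h : y i ^ 2 ≤ ‖y‖ ^ 2 := by
    rw [norm_sq_eq_sum]
    exact Finset.single_le_sum (f := fun j => y j ^ 2) (fun j _ => sq_nonneg _)
      (Finset.mem_univ i)
  calc |y i| = Real.sqrt (y i ^ 2) := (Real.sqrt_sq_eq_abs _).symm
  _ ≤ Real.sqrt (‖y‖ ^ 2) := Real.sqrt_le_sqrt h
  _ = ‖y‖ := Real.sqrt_sq (norm_nonneg _)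

lemma ball_gauss_le {b : ℝ} (hb : 0 < b) (v : EuclideanSpace ℝ (Fin 3)) (hv : v ≠ 0) :
    ∫ x in Metric.ball (0 : EuclideanSpace ℝ (Fin 3)) 1, rexp (-(b * ⟪v, ‖x‖⁻¹ • x⟫ ^ 2))
      ≤ 4 * Real.sqrt (Real.pi / (b * ‖v‖ ^ 2)) := by
  classical
  have hvn : (0 : ℝ) < ‖v‖ := norm_pos_iff.2 hv
  set lam : ℝ := b * ‖v‖ ^ 2 with hlam
  have hlam0 : 0 < lam := by positivity
  -- orthonormal basis with first vector v/‖v‖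
  have hcard : Module.finrank ℝ E3 = Fintype.card (Fin 3) := by
    simp [finrank_euclideanSpace_fin]
  have horth : Orthonormal ℝ (({0} : Set (Fin 3)).restrict
      (fun _ : Fin 3 => ‖v‖⁻¹ • v)) := by
    constructor
    · intro i
      exact norm_smul_inv_norm hv
    · intro i j hij
      exact absurd (Subtype.ext (i.2.trans j.2.symm)) hij
  obtain ⟨o, ho⟩ := horth.exists_orthonormalBasis_extension_of_card_eq hcard
  have ho0 : o 0 = ‖v‖⁻¹ • v := ho 0 rfl
  set f : Fin 3 → ℝ → ℝ :=
    ![fun t => rexp (-(lam * t ^ 2)),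
      Set.indicator (Set.Icc (-1 : ℝ) 1) (1 : ℝ → ℝ),
      Set.indicator (Set.Icc (-1 : ℝ) 1) (1 : ℝ → ℝ)] with hf
  have hint : ∀ i, Integrable (f i) := by
    intro i
    have hind : Integrable (Set.indicator (Set.Icc (-1 : ℝ) 1) (1 : ℝ → ℝ)) := by
      refine IntegrableOn.integrable_indicator ?_ measurableSet_Icc
      refine integrableOn_const ?_
      simp [Real.volume_Icc]
    fin_cases i
    · simpa [hf, neg_mul] using integrable_exp_neg_mul_sq hlam0
    · simpa [hf] using hind
    · simpa [hf] using hind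
  have hprod : Integrable (fun z : Fin 3 → ℝ => ∏ i, f i (z i)) :=
    Integrable.fintype_prod hint
  have hH2 : Integrable (fun y : E3 => ∏ i, f i (y i)) := by
    have := ((EuclideanSpace.volume_preserving_symm_measurableEquiv_toLp (Fin 3)).integrable_comp_emb
      (MeasurableEquiv.measurableEmbedding _)).2 hprod
    exact this
  have hH : Integrable (fun x : E3 => ∏ i, f i (o.repr x i)) := by
    have := ((o.repr.measurePreserving).integrable_comp_emb
      (o.repr.toHomeomorph.measurableEmbedding)).2 hH2
    exact this
  -- value of the full integral
  have hval : (∫ x : E3, ∏ i, f i (o.repr x i))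
      = Real.sqrt (Real.pi / lam) * (2 * 2) := by
    rw [(o.repr.measurePreserving).integral_comp (o.repr.toHomeomorph.measurableEmbedding)
      (fun y : E3 => ∏ i, f i (y i))]
    calc (∫ y : E3, ∏ i, f i (y i))
        = ∫ z : Fin 3 → ℝ, ∏ i, f i (z i) :=
          (EuclideanSpace.volume_preserving_symm_measurableEquiv_toLp (Fin 3)).integral_comp
            (MeasurableEquiv.measurableEmbedding _) (fun z : Fin 3 → ℝ => ∏ i, f i (z i))
    _ = ∏ i, ∫ t, f i t := MeasureTheory.integral_fintype_prod_eq_prod (ι := Fin 3) f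
    _ = Real.sqrt (Real.pi / lam) * (2 * 2) := by
        rw [Fin.prod_univ_three]
        have h0 : (∫ t, f 0 t) = Real.sqrt (Real.pi / lam) := by
          simp only [hf, Matrix.cons_val_zero, neg_mul]
          simpa [neg_mul] using integral_gaussian lam
        have hI : (∫ t, Set.indicator (Set.Icc (-1 : ℝ) 1) (1 : ℝ → ℝ) t) = 2 := by
          rw [integral_indicator_one measurableSet_Icc]
          simp [Real.volume_Icc]
          norm_num
        have h1 : (∫ t, f 1 t) = 2 := by
          rw [show f 1 = Set.indicator (Set.Icc (-1 : ℝ) 1) (1 : ℝ → ℝ) by simp [hf]]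
          exact hI
        have h2 : (∫ t, f 2 t) = 2 := by
          rw [show f 2 = Set.indicator (Set.Icc (-1 : ℝ) 1) (1 : ℝ → ℝ) by simp [hf]]
          exact hI
        rw [h0, h1, h2]; ring
  have hrepr0 : ∀ x : E3, o.repr x 0 = ‖v‖⁻¹ * ⟪v, x⟫ := by
    intro x
    rw [o.repr_apply_apply, ho0, real_inner_smul_left]
  have hmono : ∀ x ∈ Metric.ball (0 : E3) 1,
      rexp (-(b * ⟪v, ‖x‖⁻¹ • x⟫ ^ 2)) ≤ ∏ i, f i (o.repr x i) := by
    intro x hx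
    have hx1 : ‖x‖ < 1 := mem_ball_zero_iff.1 hx
    have hinner : ⟪v, x⟫ ^ 2 ≤ ⟪v, ‖x‖⁻¹ • x⟫ ^ 2 := by
      rcases eq_or_ne x 0 with rfl | hx0
      · simp
      · have hnx : 0 < ‖x‖ := norm_pos_iff.2 hx0
        have h1 : 1 ≤ ‖x‖⁻¹ := by
          nlinarith [mul_inv_cancel₀ hnx.ne', inv_pos.2 hnx]
        have h2 : 1 ≤ ‖x‖⁻¹ ^ 2 := by nlinarith
        rw [real_inner_smul_right, mul_pow]
        nlinarith [sq_nonneg ⟪v, x⟫]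
    have hband : ∀ i, |o.repr x i| ≤ 1 := by
      intro i
      calc |o.repr x i| ≤ ‖o.repr x‖ := abs_apply_le_norm _ i
      _ = ‖x‖ := o.repr.norm_map x
      _ ≤ 1 := hx1.le
    have hy0 : lam * (o.repr x 0) ^ 2 = b * ⟪v, x⟫ ^ 2 := by
      rw [hrepr0, hlam]
      field_simp
    have hmem : ∀ i, o.repr x i ∈ Set.Icc (-1 : ℝ) 1 := by
      intro i
      rcases abs_le.1 (hband i) with ⟨h1, h2⟩
      exact ⟨h1, h2⟩
    rw [Fin.prod_univ_three]
    rw [show f 1 (o.repr x 1) = 1 by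
      simp only [hf, Matrix.cons_val_one, Matrix.head_cons, Matrix.cons_val_zero]
      rw [Set.indicator_of_mem (hmem 1)]; rfl]
    rw [show f 2 (o.repr x 2) = 1 by
      simp only [hf]
      rw [show (![fun t => rexp (-(lam * t ^ 2)),
        Set.indicator (Set.Icc (-1 : ℝ) 1) (1 : ℝ → ℝ),
        Set.indicator (Set.Icc (-1 : ℝ) 1) (1 : ℝ → ℝ)] : Fin 3 → ℝ → ℝ) 2
          = Set.indicator (Set.Icc (-1 : ℝ) 1) (1 : ℝ → ℝ) by rfl]
      rw [Set.indicator_of_mem (hmem 2)]; rfl]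
    rw [show f 0 (o.repr x 0) = rexp (-(lam * (o.repr x 0) ^ 2)) by
      simp only [hf, Matrix.cons_val_zero]]
    rw [mul_one, mul_one, hy0]
    exact Real.exp_le_exp.2 (by nlinarith [hinner, hb.le])
  have hmeas : AEStronglyMeasurable
      (fun x : E3 => rexp (-(b * ⟪v, ‖x‖⁻¹ • x⟫ ^ 2))) volume := by
    have m1 : Measurable fun x : E3 => ‖x‖⁻¹ • x :=
      (measurable_norm.inv).smul measurable_id
    have m2 : Measurable fun x : E3 => ⟪v, ‖x‖⁻¹ • x⟫ := measurable_const.inner m1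
    exact (Real.measurable_exp.comp ((m2.pow_const 2).const_mul b).neg).aestronglyMeasurable
  have hLHSint : IntegrableOn
      (fun x : E3 => rexp (-(b * ⟪v, ‖x‖⁻¹ • x⟫ ^ 2))) (Metric.ball (0 : E3) 1) volume := by
    refine Measure.integrableOn_of_bounded (M := 1) measure_ball_lt_top.ne hmeas ?_
    filter_upwards with x
    rw [Real.norm_eq_abs, abs_of_pos (Real.exp_pos _)]
    exact Real.exp_le_one_iff.2 (neg_nonpos.2 (by positivity))
  have hHnn : ∀ x : E3, 0 ≤ ∏ i, f i (o.repr x i) := by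
    intro x
    refine Finset.prod_nonneg fun i _ => ?_
    fin_cases i
    · exact (Real.exp_pos _).le
    · exact Set.indicator_nonneg (fun _ _ => zero_le_one) _
    · exact Set.indicator_nonneg (fun _ _ => zero_le_one) _
  calc ∫ x in Metric.ball (0 : E3) 1, rexp (-(b * ⟪v, ‖x‖⁻¹ • x⟫ ^ 2))
      ≤ ∫ x in Metric.ball (0 : E3) 1, ∏ i, f i (o.repr x i) :=
        setIntegral_mono_on hLHSint hH.integrableOn measurableSet_ball hmono
  _ ≤ ∫ x : E3, ∏ i, f i (o.repr x i) :=
        setIntegral_le_integral hH (Filter.Eventually.of_forall hHnn)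
  _ = Real.sqrt (Real.pi / lam) * (2 * 2) := hval
  _ = 4 * Real.sqrt (Real.pi / (b * ‖v‖ ^ 2)) := by rw [← hlam]; ring


end WGEaux

open MeasureTheory Real Set Metric in
set_option maxHeartbeats 2000000 in
/-- **Weighted gain estimate** (used in the identification of Hamiltonian solutions,
Proposition 2.8): there is a constant `C = C(β)` such that for every `v ∈ ℝ³`,
`∫∫ ⟨v − v₂, ω⟩₊ M_β(v₂) e^{(β/4)|v'|²} dω dv₂ ≤ C e^{(β/4)|v|²} / (1 + |v|)`,
where `v' = v − ⟨v − v₂, ω⟩ω`. -/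
theorem weighted_gain_estimate (β : ℝ) (hβ : 0 < β) :
    ∃ C : ℝ, ∀ v : EuclideanSpace ℝ (Fin 3),
      (∫ v₂ : EuclideanSpace ℝ (Fin 3),
        ∫ ω : Metric.sphere (0 : EuclideanSpace ℝ (Fin 3)) 1,
          max ⟪v - v₂, (ω : EuclideanSpace ℝ (Fin 3))⟫ 0 * Maxwellian3 β v₂
            * Real.exp ((β / 4) *
                ‖v - ⟪v - v₂, (ω : EuclideanSpace ℝ (Fin 3))⟫ •
                  (ω : EuclideanSpace ℝ (Fin 3))‖ ^ 2)
        ∂((volume : Measure (EuclideanSpace ℝ (Fin 3))).toSphere))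
      ≤ C * Real.exp ((β / 4) * ‖v‖ ^ 2) / (1 + ‖v‖) := by
  classical
  have ha : (0 : ℝ) < β / 4 := by positivity
  set b' : ℝ := β / 8 with hb''
  have hb' : (0 : ℝ) < b' := by positivity
  set c₀ : ℝ := (β / (2 * Real.pi)) ^ ((3 : ℝ) / 2) with hc₀'
  have hc₀ : 0 ≤ c₀ := Real.rpow_nonneg (by positivity) _
  set c₂ : ℝ := Real.sqrt b'⁻¹ with hc₂'
  have hc₂0 : 0 ≤ c₂ := Real.sqrt_nonneg _
  set S : EuclideanSpace ℝ (Fin 3) → ℝ := fun v =>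
    ∫ ω : Metric.sphere (0 : EuclideanSpace ℝ (Fin 3)) 1,
      rexp (-(b' * ⟪v, (ω : EuclideanSpace ℝ (Fin 3))⟫ ^ 2))
      ∂((volume : Measure (EuclideanSpace ℝ (Fin 3))).toSphere) with hS'
  have hSint : ∀ v : EuclideanSpace ℝ (Fin 3),
      Integrable (fun ω : Metric.sphere (0 : EuclideanSpace ℝ (Fin 3)) 1 =>
        rexp (-(b' * ⟪v, (ω : EuclideanSpace ℝ (Fin 3))⟫ ^ 2)))
        ((volume : Measure (EuclideanSpace ℝ (Fin 3))).toSphere) := by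
    intro v
    have hcont : Continuous (fun ω : Metric.sphere (0 : EuclideanSpace ℝ (Fin 3)) 1 =>
        rexp (-(b' * ⟪v, (ω : EuclideanSpace ℝ (Fin 3))⟫ ^ 2))) := by
      have h1 : Continuous fun ω : Metric.sphere (0 : EuclideanSpace ℝ (Fin 3)) 1 =>
          ⟪v, (ω : EuclideanSpace ℝ (Fin 3))⟫ :=
        Continuous.inner continuous_const continuous_subtype_val
      exact Real.continuous_exp.comp ((continuous_const.mul (h1.pow 2)).neg)
    refine Integrable.mono' (integrable_const 1) hcont.aestronglyMeasurable ?_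
    filter_upwards with ω
    rw [Real.norm_eq_abs, abs_of_pos (Real.exp_pos _)]
    exact Real.exp_le_one_iff.2 (neg_nonpos.2 (by positivity))
  have hS0 : ∀ v, 0 ≤ S v := fun v => integral_nonneg fun ω => (Real.exp_pos _).le
  set T : ℝ := ∫ _ω : Metric.sphere (0 : EuclideanSpace ℝ (Fin 3)) 1, (1 : ℝ)
      ∂((volume : Measure (EuclideanSpace ℝ (Fin 3))).toSphere) with hT'
  have hT0 : 0 ≤ T := integral_nonneg fun _ => zero_le_one
  have hST : ∀ v, S v ≤ T := by
    intro v
    refine integral_mono (hSint v) (integrable_const 1) fun ω => ?_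
    exact Real.exp_le_one_iff.2 (neg_nonpos.2 (by positivity))
  set C₃ : ℝ := 12 * Real.sqrt Real.pi / Real.sqrt b' with hC₃'
  have hC₃0 : 0 ≤ C₃ := by positivity
  have hSv : ∀ v : EuclideanSpace ℝ (Fin 3), S v * ‖v‖ ≤ C₃ := by
    intro v
    rcases eq_or_ne v 0 with rfl | hv
    · simpa using hC₃0
    · have hvn : (0 : ℝ) < ‖v‖ := norm_pos_iff.2 hv
      have h1 : S v ≤ 3 * (4 * Real.sqrt (Real.pi / (b' * ‖v‖ ^ 2))) := by
        have he : S v = 3 * ∫ x in Metric.ball (0 : EuclideanSpace ℝ (Fin 3)) 1,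
            rexp (-(b' * ⟪v, ‖x‖⁻¹ • x⟫ ^ 2)) :=
          WGEaux.sphere_integral_eq (fun y => rexp (-(b' * ⟪v, y⟫ ^ 2)))
        rw [he]
        have h2 := WGEaux.ball_gauss_le hb' v hv
        nlinarith [h2]
      have h2 : Real.sqrt (Real.pi / (b' * ‖v‖ ^ 2))
          = Real.sqrt Real.pi / (Real.sqrt b' * ‖v‖) := by
        rw [Real.sqrt_div Real.pi_pos.le, show b' * ‖v‖ ^ 2 = (Real.sqrt b' * ‖v‖) ^ 2 by
          rw [mul_pow, Real.sq_sqrt hb'.le], Real.sqrt_sq (by positivity)]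
      calc S v * ‖v‖ ≤ (3 * (4 * (Real.sqrt Real.pi / (Real.sqrt b' * ‖v‖)))) * ‖v‖ := by
            rw [← h2]; exact mul_le_mul_of_nonneg_right h1 hvn.le
      _ = C₃ := by
            rw [hC₃']
            field_simp
            ring
  set K : ℝ := ∫ x : EuclideanSpace ℝ (Fin 3), (c₂ + ‖x‖) * rexp (-(β / 4 * ‖x‖ ^ 2)) with hK'
  have hgint : Integrable (fun x : EuclideanSpace ℝ (Fin 3) =>
      (c₂ + ‖x‖) * rexp (-(β / 4 * ‖x‖ ^ 2))) := by
    have hd : Integrable (fun x : EuclideanSpace ℝ (Fin 3) =>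
        (c₂ + Real.sqrt (β / 8)⁻¹) * rexp (-(β / 8 * ‖x‖ ^ 2))) :=
      (WGEaux.integrable_gauss_E3 (by positivity : (0:ℝ) < β / 8)).const_mul _
    refine hd.mono' ?_ ?_
    · have hcont : Continuous fun x : EuclideanSpace ℝ (Fin 3) =>
          (c₂ + ‖x‖) * rexp (-(β / 4 * ‖x‖ ^ 2)) := by
        have h1 : Continuous fun x : EuclideanSpace ℝ (Fin 3) => ‖x‖ := continuous_norm
        exact (continuous_const.add h1).mul
          (Real.continuous_exp.comp ((continuous_const.mul (h1.pow 2)).neg))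
      exact hcont.aestronglyMeasurable
    · filter_upwards with x
      rw [Real.norm_eq_abs, abs_of_nonneg (by positivity)]
      have h0 := WGEaux.mul_exp_sq_le (show (0:ℝ) < β / 8 by positivity) (norm_nonneg x)
      have h1 : ‖x‖ * rexp (-(β / 4 * ‖x‖ ^ 2))
          ≤ Real.sqrt (β / 8)⁻¹ * rexp (-(β / 8 * ‖x‖ ^ 2)) := by
        calc ‖x‖ * rexp (-(β / 4 * ‖x‖ ^ 2))
            = (‖x‖ * rexp (-(β / 8 * ‖x‖ ^ 2))) * rexp (-(β / 8 * ‖x‖ ^ 2)) := by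
              rw [mul_assoc ‖x‖, ← Real.exp_add]; congr 1; ring
        _ ≤ Real.sqrt (β / 8)⁻¹ * rexp (-(β / 8 * ‖x‖ ^ 2)) :=
              mul_le_mul_of_nonneg_right h0 (Real.exp_pos _).le
      have h2 : c₂ * rexp (-(β / 4 * ‖x‖ ^ 2)) ≤ c₂ * rexp (-(β / 8 * ‖x‖ ^ 2)) := by
        refine mul_le_mul_of_nonneg_left (Real.exp_le_exp.2 ?_) hc₂0
        nlinarith [sq_nonneg ‖x‖]
      nlinarith [h1, h2]
  have hK0 : 0 ≤ K := integral_nonneg fun x => by positivity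
  refine ⟨c₀ * K * (T + C₃), ?_⟩
  intro v
  have hpoint : ∀ (v₂ : EuclideanSpace ℝ (Fin 3))
      (ω : Metric.sphere (0 : EuclideanSpace ℝ (Fin 3)) 1),
      max ⟪v - v₂, (ω : EuclideanSpace ℝ (Fin 3))⟫ 0 * Maxwellian3 β v₂
          * Real.exp ((β / 4) *
              ‖v - ⟪v - v₂, (ω : EuclideanSpace ℝ (Fin 3))⟫ •
                (ω : EuclideanSpace ℝ (Fin 3))‖ ^ 2)
        ≤ (c₀ * ((c₂ + ‖v₂‖) * rexp (-(β / 4 * ‖v₂‖ ^ 2))) * rexp (β / 4 * ‖v‖ ^ 2))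
            * rexp (-(b' * ⟪v, (ω : EuclideanSpace ℝ (Fin 3))⟫ ^ 2)) := by
    intro v₂ ω
    have hω : ‖(ω : EuclideanSpace ℝ (Fin 3))‖ = 1 := by
      have := ω.2
      rwa [mem_sphere_zero_iff_norm] at this
    rw [WGEaux.collision v v₂ ω hω, inner_sub_left, Maxwellian3]
    set u : ℝ := ⟪v, (ω : EuclideanSpace ℝ (Fin 3))⟫ with hu
    set w : ℝ := ⟪v₂, (ω : EuclideanSpace ℝ (Fin 3))⟫ with hw
    have hw2 : w ^ 2 ≤ ‖v₂‖ ^ 2 := by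
      have h3 : |w| ≤ ‖v₂‖ := by
        have := abs_real_inner_le_norm v₂ (ω : EuclideanSpace ℝ (Fin 3))
        rwa [hω, mul_one] at this
      calc w ^ 2 = |w| ^ 2 := (sq_abs w).symm
      _ ≤ ‖v₂‖ ^ 2 := pow_le_pow_left₀ (abs_nonneg w) h3 2
    have hmax : max (u - w) 0 ≤ |u| + ‖v₂‖ := by
      refine max_le ?_ (by positivity)
      have h1 := le_abs_self u
      have h2 := neg_abs_le w
      have h3 : |w| ≤ ‖v₂‖ := by
        have := abs_real_inner_le_norm v₂ (ω : EuclideanSpace ℝ (Fin 3))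
        rwa [hω, mul_one] at this
      linarith
    have habs : (|u| + ‖v₂‖) * rexp (-(2 * b' * u ^ 2))
        ≤ (c₂ + ‖v₂‖) * rexp (-(b' * u ^ 2)) := by
      have h0 := WGEaux.mul_exp_sq_le hb' (abs_nonneg u)
      rw [sq_abs] at h0
      have hA : |u| * rexp (-(2 * b' * u ^ 2)) ≤ c₂ * rexp (-(b' * u ^ 2)) := by
        calc |u| * rexp (-(2 * b' * u ^ 2))
            = (|u| * rexp (-(b' * u ^ 2))) * rexp (-(b' * u ^ 2)) := by
              rw [mul_assoc |u|, ← Real.exp_add]; congr 1; ring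
        _ ≤ c₂ * rexp (-(b' * u ^ 2)) :=
              mul_le_mul_of_nonneg_right h0 (Real.exp_pos _).le
      have hB : ‖v₂‖ * rexp (-(2 * b' * u ^ 2)) ≤ ‖v₂‖ * rexp (-(b' * u ^ 2)) := by
        refine mul_le_mul_of_nonneg_left (Real.exp_le_exp.2 ?_) (norm_nonneg _)
        nlinarith [sq_nonneg u]
      calc (|u| + ‖v₂‖) * rexp (-(2 * b' * u ^ 2))
          = |u| * rexp (-(2 * b' * u ^ 2)) + ‖v₂‖ * rexp (-(2 * b' * u ^ 2)) := add_mul _ _ _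
      _ ≤ c₂ * rexp (-(b' * u ^ 2)) + ‖v₂‖ * rexp (-(b' * u ^ 2)) := add_le_add hA hB
      _ = (c₂ + ‖v₂‖) * rexp (-(b' * u ^ 2)) := (add_mul _ _ _).symm
    calc max (u - w) 0 * (c₀ * rexp (-(β / 2) * ‖v₂‖ ^ 2))
          * rexp (β / 4 * (‖v‖ ^ 2 - u ^ 2 + w ^ 2))
        ≤ (|u| + ‖v₂‖) * (c₀ * rexp (-(β / 2) * ‖v₂‖ ^ 2))
          * rexp (β / 4 * (‖v‖ ^ 2 - u ^ 2 + ‖v₂‖ ^ 2)) := by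
          refine mul_le_mul (mul_le_mul_of_nonneg_right hmax (by positivity))
            (Real.exp_le_exp.2 (by nlinarith)) (Real.exp_pos _).le (by positivity)
    _ = c₀ * ((|u| + ‖v₂‖) * rexp (-(β / 2) * ‖v₂‖ ^ 2 + β / 4 * (‖v‖ ^ 2 - u ^ 2 + ‖v₂‖ ^ 2))) := by
          rw [Real.exp_add]; ring
    _ = c₀ * ((|u| + ‖v₂‖) * rexp (-(2 * b' * u ^ 2) + (-(β / 4 * ‖v₂‖ ^ 2) + β / 4 * ‖v‖ ^ 2))) := by
          rw [show -(β / 2) * ‖v₂‖ ^ 2 + β / 4 * (‖v‖ ^ 2 - u ^ 2 + ‖v₂‖ ^ 2)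
              = -(2 * b' * u ^ 2) + (-(β / 4 * ‖v₂‖ ^ 2) + β / 4 * ‖v‖ ^ 2) by
            rw [hb'']; ring]
    _ = c₀ * (((|u| + ‖v₂‖) * rexp (-(2 * b' * u ^ 2)))
          * (rexp (-(β / 4 * ‖v₂‖ ^ 2)) * rexp (β / 4 * ‖v‖ ^ 2))) := by
          rw [Real.exp_add, Real.exp_add]; ring
    _ ≤ c₀ * (((c₂ + ‖v₂‖) * rexp (-(b' * u ^ 2)))
          * (rexp (-(β / 4 * ‖v₂‖ ^ 2)) * rexp (β / 4 * ‖v‖ ^ 2))) := by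
          refine mul_le_mul_of_nonneg_left (mul_le_mul_of_nonneg_right habs (by positivity)) hc₀
    _ = (c₀ * ((c₂ + ‖v₂‖) * rexp (-(β / 4 * ‖v₂‖ ^ 2))) * rexp (β / 4 * ‖v‖ ^ 2))
          * rexp (-(b' * u ^ 2)) := by ring
  have hinner_le : ∀ v₂ : EuclideanSpace ℝ (Fin 3),
      (∫ ω : Metric.sphere (0 : EuclideanSpace ℝ (Fin 3)) 1,
        max ⟪v - v₂, (ω : EuclideanSpace ℝ (Fin 3))⟫ 0 * Maxwellian3 β v₂
          * Real.exp ((β / 4) *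
              ‖v - ⟪v - v₂, (ω : EuclideanSpace ℝ (Fin 3))⟫ •
                (ω : EuclideanSpace ℝ (Fin 3))‖ ^ 2)
        ∂((volume : Measure (EuclideanSpace ℝ (Fin 3))).toSphere))
      ≤ (c₀ * rexp (β / 4 * ‖v‖ ^ 2) * S v) * ((c₂ + ‖v₂‖) * rexp (-(β / 4 * ‖v₂‖ ^ 2))) := by
    intro v₂
    have hMnn : 0 ≤ Maxwellian3 β v₂ := by
      rw [Maxwellian3]; positivity
    have h := integral_mono_of_nonneg (μ := (volume : Measure (EuclideanSpace ℝ (Fin 3))).toSphere)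
      (Filter.Eventually.of_forall fun ω =>
        mul_nonneg (mul_nonneg (le_max_right _ 0) hMnn) (Real.exp_pos _).le)
      (((hSint v).const_mul
        (c₀ * ((c₂ + ‖v₂‖) * rexp (-(β / 4 * ‖v₂‖ ^ 2))) * rexp (β / 4 * ‖v‖ ^ 2))))
      (Filter.Eventually.of_forall (hpoint v₂))
    rw [MeasureTheory.integral_const_mul] at h
    calc _ ≤ _ := h
    _ = (c₀ * rexp (β / 4 * ‖v‖ ^ 2) * S v) * ((c₂ + ‖v₂‖) * rexp (-(β / 4 * ‖v₂‖ ^ 2))) := by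
        rw [hS']; ring
  have houter : (∫ v₂ : EuclideanSpace ℝ (Fin 3),
        ∫ ω : Metric.sphere (0 : EuclideanSpace ℝ (Fin 3)) 1,
          max ⟪v - v₂, (ω : EuclideanSpace ℝ (Fin 3))⟫ 0 * Maxwellian3 β v₂
            * Real.exp ((β / 4) *
                ‖v - ⟪v - v₂, (ω : EuclideanSpace ℝ (Fin 3))⟫ •
                  (ω : EuclideanSpace ℝ (Fin 3))‖ ^ 2)
        ∂((volume : Measure (EuclideanSpace ℝ (Fin 3))).toSphere))
      ≤ (c₀ * rexp (β / 4 * ‖v‖ ^ 2) * S v) * K := by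
    have h := integral_mono_of_nonneg (μ := (volume : Measure (EuclideanSpace ℝ (Fin 3))))
      (Filter.Eventually.of_forall fun v₂ => integral_nonneg fun ω => by
        have hMnn : 0 ≤ Maxwellian3 β v₂ := by rw [Maxwellian3]; positivity
        exact mul_nonneg (mul_nonneg (le_max_right _ 0) hMnn) (Real.exp_pos _).le)
      (hgint.const_mul (c₀ * rexp (β / 4 * ‖v‖ ^ 2) * S v))
      (Filter.Eventually.of_forall hinner_le)
    rw [MeasureTheory.integral_const_mul] at h
    exact h
  have h1v : (0 : ℝ) < 1 + ‖v‖ := by positivity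
  rw [le_div_iff₀ h1v]
  calc (∫ v₂ : EuclideanSpace ℝ (Fin 3),
        ∫ ω : Metric.sphere (0 : EuclideanSpace ℝ (Fin 3)) 1,
          max ⟪v - v₂, (ω : EuclideanSpace ℝ (Fin 3))⟫ 0 * Maxwellian3 β v₂
            * Real.exp ((β / 4) *
                ‖v - ⟪v - v₂, (ω : EuclideanSpace ℝ (Fin 3))⟫ •
                  (ω : EuclideanSpace ℝ (Fin 3))‖ ^ 2)
        ∂((volume : Measure (EuclideanSpace ℝ (Fin 3))).toSphere)) * (1 + ‖v‖)
      ≤ ((c₀ * rexp (β / 4 * ‖v‖ ^ 2) * S v) * K) * (1 + ‖v‖) :=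
        mul_le_mul_of_nonneg_right houter h1v.le
  _ = (c₀ * K * rexp (β / 4 * ‖v‖ ^ 2)) * (S v * (1 + ‖v‖)) := by ring
  _ ≤ (c₀ * K * rexp (β / 4 * ‖v‖ ^ 2)) * (T + C₃) := by
        refine mul_le_mul_of_nonneg_left ?_ (by positivity)
        rw [mul_add, mul_one]
        exact add_le_add (hST v) (hSv v)
  _ = c₀ * K * (T + C₃) * rexp (β / 4 * ‖v‖ ^ 2) := by ring
end
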